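/- arXiv:0708.2948 — 7 statements merged into one kernel-verified Lean document; each statement's English description precedes it below -/
import Mathlib

section
/- Let γ, η: ℝ/ℤ → ℝ³ be C¹ closed curves with nowhere-vanishing derivatives whose images are disjoint, and let c ∈ ℝ³ lie in neither image, r > 0. Then ∬_{(ℝ/ℤ)²} |(I_{c,r}∘γ)′(s)| · |(I_{c,r}∘η)′(t)| / |I_{c,r}(γ(s)) − I_{c,r}(η(t))|² ds dt = ∬_{(ℝ/ℤ)²} |γ′(s)| · |η′(t)| / |γ(s) − η(t)|² ds dt. (Möbius invariance of the cross term of the energy of a two-component link, for which no renormalization is needed.) -/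
open MeasureTheory

noncomputable section

/-- ℝ³ with the Euclidean norm. -/
abbrev E3 := EuclideanSpace ℝ (Fin 3)

/-- Inversion in the sphere of center `c` and radius `r`. -/
def inv3 (c : E3) (r : ℝ) (x : E3) : E3 := c + (r ^ 2 / ‖x - c‖ ^ 2) • (x - c)

lemma inv3_eq_inversion (c : E3) (r : ℝ) :
    inv3 c r = EuclideanGeometry.inversion c r := by
  funext x
  simp only [inv3, EuclideanGeometry.inversion, vsub_eq_sub, vadd_eq_add, dist_eq_norm,
    div_pow, add_comm]

/-- Norm of the derivative of a curve composed with an inversion. -/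
lemma norm_deriv_inv3_comp {γ : ℝ → E3} (hγ : ContDiff ℝ 1 γ) (c : E3) {r : ℝ}
    (s : ℝ) (hx : γ s ≠ c) :
    ‖deriv (inv3 c r ∘ γ) s‖ = (r / dist (γ s) c) ^ 2 * ‖deriv γ s‖ := by
  rw [inv3_eq_inversion]
  have hd : HasDerivAt γ (deriv γ s) s :=
    (hγ.differentiable one_ne_zero s).hasDerivAt
  have h := (EuclideanGeometry.hasFDerivAt_inversion (R := r) hx).comp_hasDerivAt s hd
  rw [h.deriv, ContinuousLinearMap.smul_apply, norm_smul]
  simp [Real.norm_eq_abs, abs_of_nonneg (sq_nonneg (r / dist (γ s) c))]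
  exact Or.inl (by rw [div_pow, div_pow, sq_abs])

/-- Möbius invariance of the cross term of the energy of a two-component link:
for disjoint C¹ closed curves `γ, η` and an inversion `I_{c,r}` with center `c`
on neither curve,
`∬ |(I∘γ)′(s)||(I∘η)′(t)|/|I(γ(s))−I(η(t))|² ds dt = ∬ |γ′(s)||η′(t)|/|γ(s)−η(t)|² ds dt`. -/
theorem cross_energy_inversion_invariant (γ η : ℝ → E3)
    (hγ : ContDiff ℝ 1 γ) (hη : ContDiff ℝ 1 η)
    (hperγ : Function.Periodic γ 1) (hperη : Function.Periodic η 1)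
    (hregγ : ∀ s, deriv γ s ≠ 0) (hregη : ∀ t, deriv η t ≠ 0)
    (hdisj : ∀ s t : ℝ, γ s ≠ η t)
    (c : E3) (hcγ : c ∉ Set.range γ) (hcη : c ∉ Set.range η) (r : ℝ) (hr : 0 < r) :
    (∫ p in Set.Icc (0:ℝ) 1 ×ˢ Set.Icc (0:ℝ) 1,
        ‖deriv (inv3 c r ∘ γ) p.1‖ * ‖deriv (inv3 c r ∘ η) p.2‖ /
          ‖inv3 c r (γ p.1) - inv3 c r (η p.2)‖ ^ 2) =
      ∫ p in Set.Icc (0:ℝ) 1 ×ˢ Set.Icc (0:ℝ) 1,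
        ‖deriv γ p.1‖ * ‖deriv η p.2‖ / ‖γ p.1 - η p.2‖ ^ 2 := by
  refine integral_congr_ae (Filter.Eventually.of_forall fun p => ?_)
  obtain ⟨s, t⟩ := p
  have hxc : γ s ≠ c := fun h => hcγ ⟨s, h⟩
  have hyc : η t ≠ c := fun h => hcη ⟨t, h⟩
  have hxy : γ s ≠ η t := hdisj s t
  have hdx : (0:ℝ) < dist (γ s) c := dist_pos.mpr hxc
  have hdy : (0:ℝ) < dist (η t) c := dist_pos.mpr hyc
  have hdxy : (0:ℝ) < dist (γ s) (η t) := dist_pos.mpr hxy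
  have hdist : ‖inv3 c r (γ s) - inv3 c r (η t)‖ =
      r ^ 2 / (dist (γ s) c * dist (η t) c) * dist (γ s) (η t) := by
    rw [inv3_eq_inversion, ← dist_eq_norm]
    exact EuclideanGeometry.dist_inversion_inversion hxc hyc r
  have h1 := norm_deriv_inv3_comp hγ c (r := r) s hxc
  have h2 := norm_deriv_inv3_comp hη c (r := r) t hyc
  simp only [h1, h2, hdist]
  rw [← dist_eq_norm (γ s) (η t)]
  have hr0 : r ≠ 0 := ne_of_gt hr
  field_simp
end
end

section
/- ∫₀¹ ∫₀¹ ( π²/sin²(π(s−t)) − 1/min(|s−t|, 1−|s−t|)² ) ds dt = 4, where the integrand is defined for s ≠ t (and arbitrarily on the measure-zero diagonal). Equivalently, the round circle of circumference 1 (for which the chord length between points of arc-length distance d equals sin(πd)/π) satisfies E∘(round circle) = 0. -/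
open MeasureTheory Real

noncomputable section

namespace RoundCircleAux

open Set Filter Topology

/-- The energy integrand as a function of the parameter difference. -/
def f (x : ℝ) : ℝ := π ^ 2 / Real.sin (π * x) ^ 2 - 1 / min |x| (1 - |x|) ^ 2

/-- Antiderivative of the integrand on `(0, 1/2]`. -/
def G (u : ℝ) : ℝ := u⁻¹ - π * (Real.cos (π * u) / Real.sin (π * u))

lemma f_even (x : ℝ) : f (-x) = f x := by
  simp [f, abs_neg, mul_neg, Real.sin_neg]

lemma f_reflect {x : ℝ} (h0 : 0 ≤ x) (h1 : x ≤ 1) : f (1 - x) = f x := by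
  have h2 : |1 - x| = 1 - x := abs_of_nonneg (by linarith)
  have h3 : |x| = x := abs_of_nonneg h0
  have h4 : Real.sin (π * (1 - x)) = Real.sin (π * x) := by
    rw [show π * (1 - x) = π - π * x by ring, Real.sin_pi_sub]
  simp [f, h2, h3, h4, min_comm, show 1 - (1-x) = x by ring]

lemma f_shift {x : ℝ} (h0 : 0 ≤ x) (h1 : x ≤ 1) : f (x - 1) = f x := by
  rw [show x - 1 = -(1 - x) by ring, f_even, f_reflect h0 h1]

lemma f_zero : f 0 = 0 := by simp [f]

lemma sin_lb {u : ℝ} (h0 : 0 ≤ u) (h1 : u ≤ 1/2) : 2 * u ≤ Real.sin (π * u) := by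
  have := Real.mul_le_sin (x := π * u) (by positivity) (by nlinarith [Real.pi_pos])
  have hπ := Real.pi_pos
  calc 2 * u = 2 / π * (π * u) := by field_simp
    _ ≤ _ := this

lemma sin_pos' {u : ℝ} (h0 : 0 < u) (h1 : u < 1) : 0 < Real.sin (π * u) :=
  Real.sin_pos_of_pos_of_lt_pi (by positivity) (by nlinarith [Real.pi_pos])

lemma f_bound_half {x : ℝ} (h0 : 0 < x) (h1 : x ≤ 1/2) : |f x| ≤ π ^ 4 := by
  have hπ := Real.pi_pos
  have hx1 : |x| = x := abs_of_nonneg h0.le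
  have hmin : min |x| (1 - |x|) = x := by rw [hx1]; exact min_eq_left (by linarith)
  have hs2 : 2 * x ≤ Real.sin (π * x) := sin_lb h0.le h1
  have hs0 : 0 < Real.sin (π * x) := lt_of_lt_of_le (by linarith) hs2
  have hsub : Real.sin (π * x) < π * x := Real.sin_lt (by positivity)
  have hf : f x = (π ^ 2 * x ^ 2 - Real.sin (π * x) ^ 2) / (Real.sin (π * x) ^ 2 * x ^ 2) := by
    rw [f, hmin]; field_simp
  have hlow : 0 ≤ f x := by
    rw [hf]
    apply div_nonneg _ (by positivity)
    nlinarith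
  rw [abs_of_nonneg hlow]
  rcases le_or_gt x (1/4) with hc | hc
  · -- small x : use sin_gt_sub_cube
    have hy1 : π * x ≤ 1 := by nlinarith [Real.pi_lt_d2]
    have hcube : π * x - (π * x) ^ 3 / 4 < Real.sin (π * x) := by
      have := Real.sin_gt_sub_cube (x := π * x) (by positivity)
      nlinarith [pow_pos (by positivity : (0:ℝ) < π * x) 3]
    rw [hf, div_le_iff₀ (by positivity)]
    set s := Real.sin (π * x) with hsdef
    have e1 : π*x - s ≤ (π*x)^3/4 := by linarith
    have e2 : π*x + s ≤ 2*(π*x) := by linarith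
    have e4 : (π*x - s) * (π*x + s) ≤ (π*x)^3/4 * (2*(π*x)) :=
      mul_le_mul e1 e2 (by linarith) (by positivity)
    have e5 : 4*x^2 ≤ s^2 := by nlinarith
    have e6 : π^4*x^2*(4*x^2) ≤ π^4*x^2*s^2 :=
      mul_le_mul_of_nonneg_left e5 (by positivity)
    have h7 : 0 ≤ π^4*x^4 := by positivity
    nlinarith [e4, e6, h7]
  · -- x ∈ (1/4, 1/2] : crude bound
    have h2 : f x ≤ π ^ 2 / Real.sin (π * x) ^ 2 := by
      rw [f, hmin]; have : 0 < 1 / x ^ 2 := by positivity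
      linarith
    have h3 : (1:ℝ)/2 ≤ Real.sin (π * x) := by nlinarith
    have h4 : π ^ 2 / Real.sin (π * x) ^ 2 ≤ π ^ 2 / (1/4) := by
      apply div_le_div_of_nonneg_left (by positivity) (by norm_num) ?_
      nlinarith
    have h5 : (3:ℝ) < π := Real.pi_gt_three
    nlinarith [h2.trans h4, sq_nonneg (π - 3), sq_nonneg π]

lemma f_bound {x : ℝ} (hx : x ∈ Icc (-1:ℝ) 1) : |f x| ≤ π ^ 4 := by
  obtain ⟨hl, hr⟩ := hx
  have hpos : ∀ y : ℝ, 0 ≤ y → y ≤ 1 → |f y| ≤ π ^ 4 := by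
    intro y h0 h1
    rcases eq_or_lt_of_le h0 with rfl | h0
    · rw [f_zero]; simp; positivity
    rcases le_or_gt y (1/2) with h | h
    · exact f_bound_half h0 h
    · rcases eq_or_lt_of_le h1 with rfl | h1
      · have h5 := f_reflect (le_refl (0:ℝ)) zero_le_one
        norm_num [f_zero] at h5
        rw [h5]; simp; positivity
      · rw [← f_reflect h0.le h1.le]
        exact f_bound_half (by linarith) (by linarith)
  rcases le_or_gt 0 x with h | h
  · exact hpos x h hr
  · rw [← f_even]; exact hpos (-x) (by linarith) (by linarith)

lemma f_meas : Measurable f := by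
  unfold f
  fun_prop

lemma f_integrableOn : IntegrableOn f (Icc (-1:ℝ) 1) := by
  apply MeasureTheory.Measure.integrableOn_of_bounded (M := π ^ 4)
    (by simp [Real.volume_Icc]) f_meas.aestronglyMeasurable
  filter_upwards [MeasureTheory.ae_restrict_mem measurableSet_Icc] with x hx
  simpa using f_bound hx

lemma f_intInt {a b : ℝ} (ha : a ∈ Icc (-1:ℝ) 1) (hb : b ∈ Icc (-1:ℝ) 1) :
    IntervalIntegrable f volume a b := by
  constructor
  · exact f_integrableOn.mono_set ((Ioc_subset_Icc_self).trans (Icc_subset_Icc ha.1 hb.2))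
  · exact f_integrableOn.mono_set ((Ioc_subset_Icc_self).trans (Icc_subset_Icc hb.1 ha.2))

lemma hG {u : ℝ} (h0 : 0 < u) (h1 : u < 1) :
    HasDerivAt G (π ^ 2 / Real.sin (π * u) ^ 2 - 1 / u ^ 2) u := by
  have hs := sin_pos' h0 h1
  have hlin : HasDerivAt (fun u : ℝ => π * u) π u := by
    simpa using (hasDerivAt_id u).const_mul π
  have hq : HasDerivAt (fun u => Real.cos (π * u) / Real.sin (π * u))
      ((-Real.sin (π * u) * π * Real.sin (π * u) -
        Real.cos (π * u) * (Real.cos (π * u) * π)) / Real.sin (π * u) ^ 2) u :=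
    (hlin.cos).div (hlin.sin) hs.ne'
  have hinv : HasDerivAt (fun u : ℝ => u⁻¹) (-(u ^ 2)⁻¹) u := hasDerivAt_inv h0.ne'
  have := hinv.sub (hq.const_mul π)
  refine this.congr_deriv ?_
  have hpyth := Real.sin_sq_add_cos_sq (π * u)
  rw [show -Real.sin (π * u) * π * Real.sin (π * u) - Real.cos (π * u) * (Real.cos (π * u) * π) = -π by
    linear_combination (-π) * hpyth]
  field_simp
  ring

lemma G_half : G (1/2) = 2 := by
  rw [G, show π * (1/2 : ℝ) = π/2 by ring]
  simp [Real.cos_pi_div_two]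

lemma f_eq_on {u : ℝ} (h0 : 0 < u) (h1 : u ≤ 1/2) :
    f u = π ^ 2 / Real.sin (π * u) ^ 2 - 1 / u ^ 2 := by
  have : min |u| (1 - |u|) = u := by
    rw [abs_of_nonneg h0.le]; exact min_eq_left (by linarith)
  rw [f, this]

lemma integral_f_eps {ε : ℝ} (h0 : 0 < ε) (h1 : ε < 1/2) :
    ∫ u in ε..(1/2 : ℝ), f u = 2 - G ε := by
  have key : ∫ u in ε..(1/2:ℝ), (π ^ 2 / Real.sin (π * u) ^ 2 - 1 / u ^ 2) = G (1/2) - G ε := by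
    apply intervalIntegral.integral_eq_sub_of_hasDerivAt
    · intro u hu
      rw [uIcc_of_le (by linarith)] at hu
      exact hG (lt_of_lt_of_le h0 hu.1) (by linarith [hu.2])
    · apply ContinuousOn.intervalIntegrable
      rw [uIcc_of_le (by linarith)]
      apply ContinuousOn.sub
      · apply ContinuousOn.div continuousOn_const
        · fun_prop
        · intro u hu
          exact pow_ne_zero _ (sin_pos' (lt_of_lt_of_le h0 hu.1) (by linarith [hu.2])).ne'
      · apply ContinuousOn.div continuousOn_const (by fun_prop)
        intro u hu
        exact pow_ne_zero _ (lt_of_lt_of_le h0 hu.1).ne'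
  have congr1 : ∫ u in ε..(1/2:ℝ), f u
      = ∫ u in ε..(1/2:ℝ), (π ^ 2 / Real.sin (π * u) ^ 2 - 1 / u ^ 2) := by
    apply intervalIntegral.integral_congr
    intro u hu
    rw [uIcc_of_le (by linarith)] at hu
    exact f_eq_on (lt_of_lt_of_le h0 hu.1) hu.2
  rw [congr1, key, G_half]

lemma G_bounds {ε : ℝ} (h0 : 0 < ε) (h1 : ε < 1/2) : 0 ≤ G ε ∧ G ε ≤ π ^ 3 * ε := by
  have hπ := Real.pi_pos
  set s := Real.sin (π * ε) with hs
  set c := Real.cos (π * ε) with hc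
  have hs2 : 2 * ε ≤ s := sin_lb h0.le h1.le
  have hspos : 0 < s := lt_of_lt_of_le (by linarith) hs2
  have hslt : s < π * ε := Real.sin_lt (by positivity)
  have hcos : 1 - (π * ε) ^ 2 / 2 ≤ c := Real.one_sub_sq_div_two_le_cos
  have hcpos : 0 < c := Real.cos_pos_of_mem_Ioo ⟨by nlinarith, by nlinarith⟩
  have htan : π * ε < Real.tan (π * ε) := Real.lt_tan (by positivity) (by nlinarith)
  have htan' : π * ε * c < s := by
    rw [Real.tan_eq_sin_div_cos] at htan
    calc π * ε * c < (s / c) * c := by exact mul_lt_mul_of_pos_right htan hcpos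
      _ = s := by field_simp
  have hGeq : G ε = (s - π * ε * c) / (ε * s) := by
    rw [G, ← hs, ← hc]; field_simp
  constructor
  · rw [hGeq]; apply div_nonneg (by linarith) (by positivity)
  · rw [hGeq, div_le_iff₀ (by positivity)]
    have hcle : c ≤ 1 := Real.cos_le_one _
    nlinarith [mul_le_mul_of_nonneg_left hs2 (show (0:ℝ) ≤ π^3*ε*ε by positivity)]

lemma G_tendsto : Tendsto G (𝓝[>] (0:ℝ)) (𝓝 0) := by
  have hmem : Ioo (0:ℝ) (1/2) ∈ 𝓝[>] (0:ℝ) := Ioo_mem_nhdsGT_of_mem ⟨le_refl _, by norm_num⟩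
  have hup : Tendsto (fun ε : ℝ => π ^ 3 * ε) (𝓝[>] (0:ℝ)) (𝓝 0) := by
    have : Tendsto (fun ε : ℝ => π ^ 3 * ε) (𝓝 (0:ℝ)) (𝓝 (π ^ 3 * 0)) :=
      (continuous_const.mul continuous_id).tendsto 0
    simpa using this.mono_left nhdsWithin_le_nhds
  apply tendsto_of_tendsto_of_tendsto_of_le_of_le' tendsto_const_nhds hup
  · filter_upwards [hmem] with ε hε; exact (G_bounds hε.1 hε.2).1
  · filter_upwards [hmem] with ε hε; exact (G_bounds hε.1 hε.2).2

lemma integral_f_half : ∫ u in (0:ℝ)..(1/2:ℝ), f u = 2 := by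
  have hmem : Ioo (0:ℝ) (1/2) ∈ 𝓝[>] (0:ℝ) := Ioo_mem_nhdsGT_of_mem ⟨le_refl _, by norm_num⟩
  -- the truncated integrals tend to the full integral
  have hsmall : Tendsto (fun ε : ℝ => ∫ u in (0:ℝ)..ε, f u) (𝓝[>] (0:ℝ)) (𝓝 0) := by
    apply squeeze_zero_norm' (t₀ := 𝓝[>] (0:ℝ)) (a := fun ε : ℝ => π ^ 4 * ε) ?_ ?_
    · filter_upwards [hmem] with ε hε
      have hb : ∀ u ∈ Set.uIoc (0:ℝ) ε, ‖f u‖ ≤ π ^ 4 := by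
        intro u hu
        rw [Set.uIoc_of_le hε.1.le] at hu
        exact f_bound ⟨by linarith [hu.1], by linarith [hu.2, hε.2]⟩
      have := intervalIntegral.norm_integral_le_of_norm_le_const hb
      rw [show |ε - 0| = ε from by rw [sub_zero]; exact abs_of_pos hε.1] at this
      linarith [this]
    · have : Tendsto (fun ε : ℝ => π ^ 4 * ε) (𝓝 (0:ℝ)) (𝓝 (π ^ 4 * 0)) :=
        (continuous_const.mul continuous_id).tendsto 0
      simpa using this.mono_left nhdsWithin_le_nhds
  have h1 : Tendsto (fun ε : ℝ => ∫ u in ε..(1/2:ℝ), f u) (𝓝[>] (0:ℝ))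
      (𝓝 (∫ u in (0:ℝ)..(1/2:ℝ), f u)) := by
    have heq : ∀ᶠ ε in 𝓝[>] (0:ℝ), (∫ u in (0:ℝ)..(1/2:ℝ), f u) - (∫ u in (0:ℝ)..ε, f u)
        = ∫ u in ε..(1/2:ℝ), f u := by
      filter_upwards [hmem] with ε hε
      have ha : IntervalIntegrable f volume 0 ε :=
        f_intInt (by norm_num) ⟨by linarith [hε.1], by linarith [hε.2]⟩
      have hb : IntervalIntegrable f volume ε (1/2) :=
        f_intInt ⟨by linarith [hε.1], by linarith [hε.2]⟩ (by norm_num)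
      rw [← intervalIntegral.integral_add_adjacent_intervals ha hb]
      ring
    have := (tendsto_const_nhds.sub hsmall :
      Tendsto (fun ε : ℝ => (∫ u in (0:ℝ)..(1/2:ℝ), f u) - ∫ u in (0:ℝ)..ε, f u)
        (𝓝[>] (0:ℝ)) (𝓝 ((∫ u in (0:ℝ)..(1/2:ℝ), f u) - 0)))
    rw [sub_zero] at this
    exact this.congr' heq
  have h2 : Tendsto (fun ε : ℝ => ∫ u in ε..(1/2:ℝ), f u) (𝓝[>] (0:ℝ)) (𝓝 2) := by
    have heq : ∀ᶠ ε in 𝓝[>] (0:ℝ), 2 - G ε = ∫ u in ε..(1/2:ℝ), f u := by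
      filter_upwards [hmem] with ε hε
      exact (integral_f_eps hε.1 hε.2).symm
    have := (tendsto_const_nhds.sub G_tendsto :
      Tendsto (fun ε : ℝ => 2 - G ε) (𝓝[>] (0:ℝ)) (𝓝 (2 - 0)))
    rw [sub_zero] at this
    exact this.congr' heq
  exact tendsto_nhds_unique h1 h2

lemma integral_f_second : ∫ u in (1/2:ℝ)..(1:ℝ), f u = 2 := by
  have hsub := intervalIntegral.integral_comp_sub_left (a := (0:ℝ)) (b := (1/2:ℝ)) f 1
  rw [show (1:ℝ) - 1/2 = 1/2 by norm_num, show (1:ℝ) - 0 = 1 by norm_num] at hsub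
  rw [← hsub]
  have : ∫ x in (0:ℝ)..(1/2:ℝ), f (1 - x) = ∫ x in (0:ℝ)..(1/2:ℝ), f x := by
    apply intervalIntegral.integral_congr
    intro x hx
    rw [Set.uIcc_of_le (by norm_num)] at hx
    exact f_reflect hx.1 (by linarith [hx.2])
  rw [this, integral_f_half]

lemma integral_f_one : ∫ u in (0:ℝ)..(1:ℝ), f u = 4 := by
  rw [← intervalIntegral.integral_add_adjacent_intervals
    (f_intInt (by norm_num) (by norm_num) : IntervalIntegrable f volume 0 (1/2))
    (f_intInt (by norm_num) (by norm_num) : IntervalIntegrable f volume (1/2) 1),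
    integral_f_half, integral_f_second]
  norm_num

lemma inner_integral {s : ℝ} (h0 : 0 ≤ s) (h1 : s ≤ 1) :
    ∫ t in (0:ℝ)..(1:ℝ), f (s - t) = 4 := by
  rw [intervalIntegral.integral_comp_sub_left f s, sub_zero]
  have hs1 : (s - 1) ∈ Icc (-1:ℝ) 1 := ⟨by linarith, by linarith⟩
  have hs : s ∈ Icc (-1:ℝ) 1 := ⟨by linarith, by linarith⟩
  have h01 : (0:ℝ) ∈ Icc (-1:ℝ) 1 := by norm_num
  have h11 : (1:ℝ) ∈ Icc (-1:ℝ) 1 := by norm_num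
  rw [← intervalIntegral.integral_add_adjacent_intervals
    (f_intInt hs1 h01) (f_intInt h01 hs)]
  have hshift : ∫ x in (s-1)..(0:ℝ), f x = ∫ x in s..(1:ℝ), f x := by
    have hcomp := intervalIntegral.integral_comp_sub_right (a := s) (b := (1:ℝ)) f 1
    rw [show (1:ℝ) - 1 = 0 by norm_num] at hcomp
    rw [← hcomp]
    apply intervalIntegral.integral_congr
    intro x hx
    rw [Set.uIcc_of_le h1] at hx
    exact f_shift (le_trans h0 hx.1) hx.2
  rw [hshift, add_comm,
    intervalIntegral.integral_add_adjacent_intervals (f_intInt h01 hs) (f_intInt hs h11),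
    integral_f_one]

end RoundCircleAux

/-- The arc-length distance on ℝ/ℤ, written for parameters `s, t ∈ [0,1]`. -/
def arcd (s t : ℝ) : ℝ := min |s - t| (1 - |s - t|)

/-- The round circle of circumference 1 has O'Hara energy `E∘ = 0`: since the chord
length between points of arc-length distance `d` is `sin(πd)/π`, this reads
`∫₀¹∫₀¹ ( π²/sin²(π(s−t)) − 1/min(|s−t|, 1−|s−t|)² ) ds dt = 4`. -/
theorem round_circle_energy :
    (∫ s in (0:ℝ)..1, ∫ t in (0:ℝ)..1,
        (π ^ 2 / Real.sin (π * (s - t)) ^ 2 - 1 / arcd s t ^ 2)) = 4 := by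
  have hinner : ∀ s ∈ Set.uIcc (0:ℝ) 1,
      (∫ t in (0:ℝ)..1, (π ^ 2 / Real.sin (π * (s - t)) ^ 2 - 1 / arcd s t ^ 2))
        = (fun _ : ℝ => (4:ℝ)) s := by
    intro s hs
    rw [Set.uIcc_of_le (by norm_num)] at hs
    have hpt : ∀ t : ℝ, π ^ 2 / Real.sin (π * (s - t)) ^ 2 - 1 / arcd s t ^ 2
        = RoundCircleAux.f (s - t) := fun t => rfl
    simp_rw [hpt]
    exact RoundCircleAux.inner_integral hs.1 hs.2
  rw [intervalIntegral.integral_congr hinner]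
  simp
end
end

section
/- Let 0 < α < 3 and let γ: ℝ/ℤ → ℝ³ be a C² injective closed curve parametrized by arc length (|γ′| ≡ 1, total length 1). Then the nonnegative function (s,t) ↦ 1/|γ(s)−γ(t)|^α − 1/d(s,t)^α is integrable on (ℝ/ℤ)², i.e. E^(α)(γ) = ∬_{(ℝ/ℤ)²} ( 1/|γ(s)−γ(t)|^α − 1/d(s,t)^α ) ds dt < ∞. (E^(α) is well-defined for α < 3.) -/
open MeasureTheory

noncomputable section

open Set

lemma intervalIntegrable_abs_rpow {β : ℝ} (hβ : -1 < β) (a b : ℝ) :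
    IntervalIntegrable (fun u : ℝ => |u| ^ β) volume a b := by
  have key : ∀ c : ℝ, 0 ≤ c → IntervalIntegrable (fun u : ℝ => |u| ^ β) volume 0 c := by
    intro c hc
    have h := intervalIntegral.intervalIntegrable_rpow' (a := 0) (b := c) hβ
    rw [intervalIntegrable_iff] at h ⊢
    refine h.congr_fun ?_ measurableSet_uIoc
    intro x hx
    rw [Set.uIoc_of_le hc] at hx
    simp only [abs_of_pos hx.1]
  have all : ∀ c : ℝ, IntervalIntegrable (fun u : ℝ => |u| ^ β) volume 0 c := by
    intro c
    rcases le_total 0 c with hc | hc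
    · exact key c hc
    · rw [IntervalIntegrable.iff_comp_neg]
      simpa using key (-c) (by linarith)
  exact ((all a).symm.trans (all b))

lemma integrableOn_abs_rpow {β : ℝ} (hβ : -1 < β) (a b : ℝ) :
    IntegrableOn (fun u : ℝ => |u| ^ β) (Set.Icc a b) := by
  rcases le_total a b with hab | hab
  · rw [← intervalIntegrable_iff_integrableOn_Icc_of_le hab]
    exact intervalIntegrable_abs_rpow hβ a b
  · rcases eq_or_lt_of_le hab with h | h
    · subst h; rw [Set.Icc_self]
      exact (integrableOn_singleton_iff (f := fun u : ℝ => |u| ^ β)).mpr (Or.inr (by simp))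
    · rw [Set.Icc_eq_empty (by exact not_le.mpr h)]
      exact integrableOn_empty

lemma sq_integrable {β : ℝ} (hβ : -1 < β) (c : ℝ) (hc : |c| ≤ 1) :
    IntegrableOn (fun p : ℝ × ℝ => |p.1 - p.2 - c| ^ β) (Set.Icc 0 1 ×ˢ Set.Icc 0 1) := by
  have habs : Measurable (fun u : ℝ => |u| ^ β) := by
    refine measurable_of_continuousOn_compl_singleton (0 : ℝ) ?_
    exact (continuous_abs.continuousOn).rpow_const
      (fun x hx => Or.inl (abs_ne_zero.mpr (by simpa using hx)))
  have hmeas0 : Measurable (fun p : ℝ × ℝ => |p.1 - p.2 - c| ^ β) :=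
    habs.comp ((measurable_fst.sub measurable_snd).sub measurable_const)
  rw [IntegrableOn, Measure.volume_eq_prod, ← Measure.prod_restrict]
  have hmeas : AEStronglyMeasurable (fun p : ℝ × ℝ => |p.1 - p.2 - c| ^ β)
      ((volume.restrict (Set.Icc 0 1)).prod (volume.restrict (Set.Icc 0 1))) :=
    hmeas0.aestronglyMeasurable
  rw [integrable_prod_iff hmeas]
  constructor
  · refine Filter.Eventually.of_forall (fun s => ?_)
    have h := (intervalIntegrable_abs_rpow hβ (s - c - 0) (s - c - 1)).comp_sub_left (s - c)
    simp only [sub_sub_cancel] at h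
    rw [intervalIntegrable_iff_integrableOn_Icc_of_le (by norm_num)] at h
    refine (h.congr_fun (fun t _ => ?_) measurableSet_Icc :)
    rw [show s - c - t = s - t - c by ring]
  · set B : ℝ := ∫ u in Set.Icc (-3:ℝ) 3, |u| ^ β with hB
    refine Integrable.mono' (integrable_const B) (hmeas.norm.integral_prod_right') ?_
    filter_upwards [ae_restrict_mem measurableSet_Icc] with s hs
    have hnn : 0 ≤ ∫ t in Set.Icc (0:ℝ) 1, ‖|s - t - c| ^ β‖ :=
      integral_nonneg fun t => norm_nonneg _
    rw [Real.norm_of_nonneg hnn]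
    have heq : ∀ t : ℝ, ‖|s - t - c| ^ β‖ = |(s - c) - t| ^ β := by
      intro t
      rw [Real.norm_of_nonneg (Real.rpow_nonneg (abs_nonneg _) _),
        show s - t - c = s - c - t by ring]
    simp only [heq]
    have h1 : (∫ t in Set.Icc (0:ℝ) 1, |(s - c) - t| ^ β)
        = ∫ u in Set.Ioc (s - c - 1) (s - c), |u| ^ β := by
      rw [MeasureTheory.integral_Icc_eq_integral_Ioc,
        ← intervalIntegral.integral_of_le (by norm_num : (0:ℝ) ≤ 1),
        intervalIntegral.integral_comp_sub_left (fun u => |u| ^ β) (s - c), sub_zero,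
        intervalIntegral.integral_of_le (by linarith : s - c - 1 ≤ s - c)]
    rw [h1, hB]
    refine setIntegral_mono_set (integrableOn_abs_rpow hβ _ _) ?_ ?_
    · exact Filter.Eventually.of_forall fun u => Real.rpow_nonneg (abs_nonneg _) _
    · refine Filter.Eventually.of_forall fun u hu => ?_
      rcases abs_le.mp hc with ⟨hc1, hc2⟩
      have hu1 := hu.1
      have hu2 := hu.2
      exact Set.mem_Icc.mpr ⟨by linarith [hs.1], by linarith [hs.2]⟩

lemma arcd_nonneg {s t : ℝ} (h : |s - t| ≤ 1) : 0 ≤ arcd s t :=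
  le_min (abs_nonneg _) (by linarith)

lemma arcd_le_abs (s t : ℝ) : arcd s t ≤ |s - t| := min_le_left _ _

lemma arcd_cases {s t : ℝ} (hs : s ∈ Set.Icc (0:ℝ) 1) (ht : t ∈ Set.Icc (0:ℝ) 1) :
    1 - |s - t| = |s - t - 1| ∨ 1 - |s - t| = |s - t + 1| := by
  rcases le_total t s with h | h
  · left
    rw [abs_of_nonneg (by linarith), abs_of_nonpos (by linarith [hs.2, ht.1] : s - t - 1 ≤ 0)]
    ring
  · right
    rw [abs_of_nonpos (by linarith), abs_of_nonneg (by linarith [hs.1, ht.2] : 0 ≤ s - t + 1)]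
    ring

lemma abs_sub_le_one {s t : ℝ} (hs : s ∈ Set.Icc (0:ℝ) 1) (ht : t ∈ Set.Icc (0:ℝ) 1) :
    |s - t| ≤ 1 := by
  rw [abs_le]; exact ⟨by linarith [hs.1, ht.2], by linarith [hs.2, ht.1]⟩

lemma arcd_rpow_le {β s t : ℝ} (hs : s ∈ Set.Icc (0:ℝ) 1) (ht : t ∈ Set.Icc (0:ℝ) 1)
    (hβ : 0 ≤ β ∨ β < 0) :
    arcd s t ^ β ≤ |s - t| ^ β + |s - t - 1| ^ β + |s - t + 1| ^ β := by
  have hnn := arcd_nonneg (abs_sub_le_one hs ht)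
  have h2 : (0:ℝ) ≤ |s - t - 1| ^ β := Real.rpow_nonneg (abs_nonneg _) _
  have h3 : (0:ℝ) ≤ |s - t + 1| ^ β := Real.rpow_nonneg (abs_nonneg _) _
  have h1 : (0:ℝ) ≤ |s - t| ^ β := Real.rpow_nonneg (abs_nonneg _) _
  rcases hβ with hβ | hβ
  · have : arcd s t ^ β ≤ |s - t| ^ β :=
      Real.rpow_le_rpow hnn (arcd_le_abs s t) hβ
    linarith
  · rcases eq_or_lt_of_le hnn with h0 | hpos
    · rw [← h0, Real.zero_rpow (by linarith : β ≠ 0)]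
      linarith
    · rcases min_choice |s - t| (1 - |s - t|) with hmin | hmin
      · rw [show arcd s t = min |s - t| (1 - |s - t|) from rfl, hmin]
        linarith
      · rw [show arcd s t = min |s - t| (1 - |s - t|) from rfl, hmin]
        rcases arcd_cases hs ht with he | he <;> rw [he] <;> linarith

lemma measurable_abs_rpow (β : ℝ) : Measurable (fun u : ℝ => |u| ^ β) := by
  refine measurable_of_continuousOn_compl_singleton (0 : ℝ) ?_
  exact (continuous_abs.continuousOn).rpow_const
    (fun x hx => Or.inl (abs_ne_zero.mpr (by simpa using hx)))

lemma continuous_arcd : Continuous (fun p : ℝ × ℝ => arcd p.1 p.2) := by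
  unfold arcd
  fun_prop

lemma aesm_arcd_rpow (β : ℝ) :
    AEStronglyMeasurable (fun p : ℝ × ℝ => arcd p.1 p.2 ^ β)
      (volume.restrict (Set.Icc 0 1 ×ˢ Set.Icc 0 1)) := by
  have hg0 : Measurable (fun p : ℝ × ℝ => |arcd p.1 p.2| ^ β) :=
    (measurable_abs_rpow β).comp continuous_arcd.measurable
  refine hg0.aestronglyMeasurable.congr ?_
  filter_upwards [ae_restrict_mem (measurableSet_Icc.prod measurableSet_Icc)] with p hp
  rw [abs_of_nonneg (arcd_nonneg (abs_sub_le_one hp.1 hp.2))]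

lemma integrableOn_arcd_rpow {β : ℝ} (hβl : -1 < β) :
    IntegrableOn (fun p : ℝ × ℝ => arcd p.1 p.2 ^ β) (Set.Icc 0 1 ×ˢ Set.Icc 0 1) := by
  have hg : IntegrableOn (fun p : ℝ × ℝ =>
      |p.1 - p.2| ^ β + |p.1 - p.2 - 1| ^ β + |p.1 - p.2 + 1| ^ β)
      (Set.Icc 0 1 ×ˢ Set.Icc 0 1) := by
    have h0 := sq_integrable hβl 0 (by norm_num)
    have h1 := sq_integrable hβl 1 (by norm_num)
    have h2 := sq_integrable hβl (-1) (by norm_num)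
    simp only [sub_zero, sub_neg_eq_add] at h0 h1 h2
    exact (h0.add h1).add h2
  refine hg.mono' ?_ ?_
  · exact aesm_arcd_rpow β
  · filter_upwards [ae_restrict_mem (measurableSet_Icc.prod measurableSet_Icc)] with p hp
    have hb := arcd_rpow_le hp.1 hp.2 (le_or_gt 0 β)
    have hnn : 0 ≤ arcd p.1 p.2 ^ β :=
      Real.rpow_nonneg (arcd_nonneg (abs_sub_le_one hp.1 hp.2)) _
    rw [Real.norm_of_nonneg hnn]
    exact hb

lemma chord_le {γ : ℝ → E3} (hdiff : Differentiable ℝ γ)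
    (hunit : ∀ s : ℝ, ‖deriv γ s‖ = 1) (s t : ℝ) : ‖γ s - γ t‖ ≤ |s - t| := by
  have := convex_univ.norm_image_sub_le_of_norm_hasDerivWithin_le
    (f := γ) (f' := deriv γ) (C := 1)
    (fun x _ => (hdiff x).hasDerivAt.hasDerivWithinAt)
    (fun x _ => (hunit x).le) (Set.mem_univ t) (Set.mem_univ s)
  simpa using this

lemma chord_lower {γ : ℝ → E3} (hC2 : ContDiff ℝ 2 γ)
    (hunit : ∀ s : ℝ, ‖deriv γ s‖ = 1) :
    ∃ K : ℝ, 0 ≤ K ∧ ∀ t s : ℝ, -1 ≤ t → t ≤ s → s ≤ 2 →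
      (s - t) - K * (s - t) ^ 3 ≤ ‖γ s - γ t‖ := by
  have hd1 : Differentiable ℝ γ := hC2.differentiable (by norm_num)
  have hC1 : ContDiff ℝ 1 (deriv γ) := by
    have h2 : ContDiff ℝ (1 + 1 : ℕ) γ := by exact_mod_cast hC2
    exact (contDiff_succ_iff_deriv.mp h2).2.2
  have hd2 : Differentiable ℝ (deriv γ) := hC1.differentiable one_ne_zero
  have hcont2 : Continuous (deriv (deriv γ)) := (contDiff_one_iff_deriv.mp hC1).2
  obtain ⟨x0, _, hx0⟩ := isCompact_Icc.exists_isMaxOn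
    (Set.nonempty_Icc.mpr (by norm_num : (-1:ℝ) ≤ 2)) hcont2.norm.continuousOn
  set M := ‖deriv (deriv γ) x0‖ with hM
  have hM0 : 0 ≤ M := norm_nonneg _
  have hlip : ∀ u ∈ Set.Icc (-1:ℝ) 2, ∀ v ∈ Set.Icc (-1:ℝ) 2,
      ‖deriv γ u - deriv γ v‖ ≤ M * |u - v| := by
    intro u hu v hv
    have := (convex_Icc (-1:ℝ) 2).norm_image_sub_le_of_norm_hasDerivWithin_le
      (f := deriv γ) (f' := deriv (deriv γ)) (C := M)
      (fun x hx => (hd2 x).hasDerivAt.hasDerivWithinAt)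
      (fun x hx => hx0 hx) hv hu
    simpa using this
  refine ⟨M ^ 2 / 2, by positivity, fun t s ht hts hs2 => ?_⟩
  set T := deriv γ t with hT
  have hTn : ‖T‖ = 1 := hunit t
  have hderive : ∀ u : ℝ, HasDerivAt (fun u => (innerSL ℝ T) (γ u))
      ((innerSL ℝ T) (deriv γ u)) u :=
    fun u => ((innerSL ℝ T).hasFDerivAt.comp_hasDerivAt u (hd1 u).hasDerivAt)
  have hcontI : Continuous fun u => (innerSL ℝ T) (deriv γ u) :=
    (innerSL ℝ T).continuous.comp (hC1.continuous)
  have hFTC : (∫ u in t..s, (innerSL ℝ T) (deriv γ u))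
      = (innerSL ℝ T) (γ s) - (innerSL ℝ T) (γ t) :=
    intervalIntegral.integral_eq_sub_of_hasDerivAt (fun u _ => hderive u)
      (hcontI.intervalIntegrable t s)
  have hbound : ∀ u ∈ Set.Icc t s,
      1 - M ^ 2 * (s - t) ^ 2 / 2 ≤ (innerSL ℝ T) (deriv γ u) := by
    intro u hu
    have hlipu : ‖deriv γ u - T‖ ≤ M * (s - t) := by
      have h1 := hlip u ⟨by linarith [hu.1], by linarith [hu.2]⟩ t
        ⟨ht, by linarith⟩
      have : |u - t| ≤ s - t := by
        rw [abs_of_nonneg (by linarith [hu.1])]; linarith [hu.2]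
      calc ‖deriv γ u - T‖ ≤ M * |u - t| := h1
        _ ≤ M * (s - t) := by nlinarith
    have hinner : (innerSL ℝ T) (deriv γ u)
        = 1 - ‖deriv γ u - T‖ ^ 2 / 2 := by
      have hsq := @norm_sub_sq_real E3 _ _ (deriv γ u) T
      have h1 : ‖deriv γ u‖ = 1 := hunit u
      have hsymm : (innerSL ℝ T) (deriv γ u) = inner ℝ (deriv γ u) T := by
        rw [innerSL_apply_apply]; exact real_inner_comm _ _
      rw [hsymm]
      rw [h1, hTn] at hsq
      nlinarith [hsq]
    rw [hinner]
    have : ‖deriv γ u - T‖ ^ 2 ≤ (M * (s - t)) ^ 2 := by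
      nlinarith [norm_nonneg (deriv γ u - T)]
    nlinarith
  have hmono : (s - t) * (1 - M ^ 2 * (s - t) ^ 2 / 2)
      ≤ ∫ u in t..s, (innerSL ℝ T) (deriv γ u) := by
    have h := intervalIntegral.integral_mono_on (f := fun _ : ℝ => 1 - M ^ 2 * (s - t) ^ 2 / 2)
      (g := fun u => (innerSL ℝ T) (deriv γ u)) hts
      (intervalIntegrable_const (μ := volume)) (hcontI.intervalIntegrable t s) hbound
    rwa [intervalIntegral.integral_const, smul_eq_mul] at h
  have hCS : (innerSL ℝ T) (γ s) - (innerSL ℝ T) (γ t) ≤ ‖γ s - γ t‖ := by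
    have h1 : (innerSL ℝ T) (γ s) - (innerSL ℝ T) (γ t)
        = inner ℝ T (γ s - γ t) := by
      rw [innerSL_apply_apply, innerSL_apply_apply, inner_sub_right]
    rw [h1]
    calc inner ℝ T (γ s - γ t) ≤ ‖T‖ * ‖γ s - γ t‖ := real_inner_le_norm _ _
      _ = ‖γ s - γ t‖ := by rw [hTn, one_mul]
  nlinarith [hFTC, hmono, hCS]

lemma one_sub_rpow_le {x α : ℝ} (hα : 0 < α) (hx : 0 < x) (hx1 : x ≤ 1) :
    1 - x ^ α ≤ max 1 α * (1 - x) := by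
  rcases le_total α 1 with h | h
  · have h3 : x ^ (1:ℝ) ≤ x ^ α := Real.rpow_le_rpow_of_exponent_ge hx hx1 h
    rw [Real.rpow_one] at h3
    have h4 : (1:ℝ) ≤ max 1 α := le_max_left _ _
    nlinarith
  · have hb := one_add_mul_self_le_rpow_one_add (by linarith : (-1:ℝ) ≤ x - 1) h
    rw [show (1 + (x - 1)) = x by ring] at hb
    have h4 : α ≤ max 1 α := le_max_right _ _
    nlinarith

lemma rpow_inv_diff_le {α r d : ℝ} (hα : 0 < α) (hr : 0 < r) (hrd : r ≤ d) :
    1 / r ^ α - 1 / d ^ α ≤ max 1 α * (1 / r ^ α) * ((d - r) / d) := by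
  have hd : 0 < d := lt_of_lt_of_le hr hrd
  have hx : 0 < r / d := div_pos hr hd
  have hx1 : r / d ≤ 1 := (div_le_one hd).mpr hrd
  have key := one_sub_rpow_le hα hx hx1
  have hxα : (r / d) ^ α = r ^ α / d ^ α := Real.div_rpow hr.le hd.le α
  rw [hxα] at key
  have hrα : 0 < r ^ α := Real.rpow_pos_of_pos hr α
  have hdα : 0 < d ^ α := Real.rpow_pos_of_pos hd α
  have hmul := mul_le_mul_of_nonneg_left key (by positivity : (0:ℝ) ≤ 1 / r ^ α)
  calc 1 / r ^ α - 1 / d ^ α = 1 / r ^ α * (1 - r ^ α / d ^ α) := by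
        field_simp
    _ ≤ 1 / r ^ α * (max 1 α * (1 - r / d)) := hmul
    _ = max 1 α * (1 / r ^ α) * ((d - r) / d) := by
        field_simp

lemma arcd_eq_zero_of_int {s t : ℝ} (hs : s ∈ Set.Icc (0:ℝ) 1) (ht : t ∈ Set.Icc (0:ℝ) 1)
    {n : ℤ} (h : s - t = n) : arcd s t = 0 := by
  have h1' : (-1:ℤ) ≤ n := by
    have : (-1:ℝ) ≤ (n:ℝ) := by rw [← h]; linarith [hs.1, ht.2]
    exact_mod_cast this
  have h2' : n ≤ 1 := by
    have : (n:ℝ) ≤ 1 := by rw [← h]; linarith [hs.2, ht.1]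
    exact_mod_cast this
  interval_cases n <;> rw [arcd] <;> rw [h] <;> norm_num

lemma chord_eq_zero_of_arcd_zero {γ : ℝ → E3} (hper : Function.Periodic γ 1)
    {s t : ℝ} (hst : |s - t| ≤ 1) (h : arcd s t = 0) : γ s = γ t := by
  rcases min_choice |s - t| (1 - |s - t|) with hmin | hmin <;>
    rw [show arcd s t = min |s - t| (1 - |s - t|) from rfl] at h
  · have : |s - t| = 0 := by rw [← hmin]; exact h
    have : s = t := by have := abs_eq_zero.mp this; linarith
    rw [this]
  · have habs : |s - t| = 1 := by rw [hmin] at h; linarith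
    rcases abs_eq (by norm_num : (0:ℝ) ≤ 1) |>.mp habs with h1 | h1
    · have : s = t + 1 := by linarith
      rw [this, hper t]
    · have : t = s + 1 := by linarith
      rw [this, hper s]

/-- `E^(α)` is well defined for `α < 3`: for `0 < α < 3` and a C² injective closed curve
of length 1 parametrized by arc length, the nonnegative function
`(s,t) ↦ 1/|γ(s)−γ(t)|^α − 1/d(s,t)^α` is integrable on `(ℝ/ℤ)²`. -/
theorem Ealpha_well_defined (α : ℝ) (hα0 : 0 < α) (hα3 : α < 3) (γ : ℝ → E3)
    (hC2 : ContDiff ℝ 2 γ)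
    (hper : Function.Periodic γ 1)
    (hinj : ∀ s t : ℝ, γ s = γ t → ∃ n : ℤ, s - t = n)
    (hunit : ∀ s : ℝ, ‖deriv γ s‖ = 1) :
    IntegrableOn
      (fun p : ℝ × ℝ => 1 / ‖γ p.1 - γ p.2‖ ^ α - 1 / arcd p.1 p.2 ^ α)
      (Set.Icc 0 1 ×ˢ Set.Icc 0 1) := by
  have hd1 : Differentiable ℝ γ := hC2.differentiable (by norm_num)
  obtain ⟨K, hK0, hKlow⟩ := chord_lower hC2 hunit
  set sq : Set (ℝ × ℝ) := Set.Icc 0 1 ×ˢ Set.Icc 0 1 with hsq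
  have hsqmeas : MeasurableSet sq := measurableSet_Icc.prod measurableSet_Icc
  -- chord is at most arc-length distance
  have hchord_le : ∀ p ∈ sq, ‖γ p.1 - γ p.2‖ ≤ arcd p.1 p.2 := by
    rintro ⟨s, t⟩ hp
    refine le_min (chord_le hd1 hunit s t) ?_
    rcases arcd_cases hp.1 hp.2 with he | he <;> rw [he]
    · have h1 : γ t = γ (t + 1) := (hper t).symm
      calc ‖γ s - γ t‖ = ‖γ s - γ (t + 1)‖ := by rw [← h1]
        _ ≤ |s - (t + 1)| := chord_le hd1 hunit s (t + 1)
        _ = |s - t - 1| := by ring_nf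
    · have h1 : γ t = γ (t - 1) := by
        have h2 := hper (t - 1); rw [sub_add_cancel] at h2; exact h2
      calc ‖γ s - γ t‖ = ‖γ s - γ (t - 1)‖ := by rw [← h1]
        _ ≤ |s - (t - 1)| := chord_le hd1 hunit s (t - 1)
        _ = |s - t + 1| := by ring_nf
  -- the chord is positive whenever the arc-length distance is
  have hpos : ∀ p ∈ sq, 0 < arcd p.1 p.2 → 0 < ‖γ p.1 - γ p.2‖ := by
    rintro ⟨s, t⟩ hp hd
    rcases eq_or_lt_of_le (norm_nonneg (γ s - γ t)) with h0 | h0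
    · exfalso
      have hγ : γ s = γ t := by
        have := (norm_eq_zero.mp h0.symm); exact sub_eq_zero.mp this
      obtain ⟨n, hn⟩ := hinj s t hγ
      have := arcd_eq_zero_of_int hp.1 hp.2 hn
      rw [this] at hd; exact lt_irrefl 0 hd
    · exact h0
  -- chord lower bound in terms of arcd
  have hlow : ∀ p ∈ sq, arcd p.1 p.2 - K * arcd p.1 p.2 ^ 3 ≤ ‖γ p.1 - γ p.2‖ := by
    rintro ⟨s, t⟩ hp
    have hs := hp.1; have ht := hp.2
    have ha1 : |s - t| ≤ 1 := abs_sub_le_one hs ht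
    rcases le_or_gt |s - t| (1 - |s - t|) with hc | hc
    · have hd : arcd s t = |s - t| := min_eq_left hc
      rcases le_total t s with hts | hts
      · have ha : |s - t| = s - t := abs_of_nonneg (by linarith)
        have := hKlow t s (by linarith [ht.1]) hts (by linarith [hs.2])
        rw [hd, ha]; exact this
      · have ha : |s - t| = t - s := by rw [abs_of_nonpos (by linarith : s - t ≤ 0)]; ring
        have := hKlow s t (by linarith [hs.1]) hts (by linarith [ht.2])
        rw [hd, ha, norm_sub_rev]; exact this
    · have hd : arcd s t = 1 - |s - t| := min_eq_right hc.le
      rcases le_total t s with hts | hts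
      · have ha : |s - t| = s - t := abs_of_nonneg (by linarith)
        have h2 := hKlow s (t + 1) (by linarith [hs.1]) (by linarith) (by linarith [ht.2])
        rw [hper t] at h2
        rw [hd, ha, norm_sub_rev]
        calc 1 - (s - t) - K * (1 - (s - t)) ^ 3
            = (t + 1 - s) - K * (t + 1 - s) ^ 3 := by ring
          _ ≤ ‖γ t - γ s‖ := h2
      · have ha : |s - t| = t - s := by rw [abs_of_nonpos (by linarith : s - t ≤ 0)]; ring
        have h2 := hKlow t (s + 1) (by linarith [ht.1]) (by linarith) (by linarith [hs.2])
        rw [hper s] at h2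
        rw [hd, ha]
        calc 1 - (t - s) - K * (1 - (t - s)) ^ 3
            = (s + 1 - t) - K * (s + 1 - t) ^ 3 := by ring
          _ ≤ ‖γ s - γ t‖ := h2
  -- choice of δ
  set δ : ℝ := min (1/2) (1 / (2 * (K + 1))) with hδ
  have hδpos : 0 < δ := lt_min (by norm_num) (by positivity)
  have hδhalf : δ ≤ 1/2 := min_le_left _ _
  have hδK : K * δ ^ 2 ≤ 1/2 := by
    have h1 : δ ≤ 1 / (2 * (K + 1)) := min_le_right _ _
    have h2 : δ ≤ 1 := by linarith
    have h3 : δ ^ 2 ≤ δ := by nlinarith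
    have h4 : δ * (2 * (K + 1)) ≤ 1 := by
      have := mul_le_mul_of_nonneg_right h1 (by positivity : (0:ℝ) ≤ 2 * (K + 1))
      rwa [one_div, inv_mul_cancel₀ (by positivity : (2 * (K + 1)) ≠ 0)] at this
    nlinarith
  -- minimum of the chord on the region where arcd ≥ δ
  set Kset : Set (ℝ × ℝ) := sq ∩ {p : ℝ × ℝ | δ ≤ arcd p.1 p.2} with hKset
  have hKcompact : IsCompact Kset := by
    refine (isCompact_Icc.prod isCompact_Icc).of_isClosed_subset ?_ Set.inter_subset_left
    exact (isClosed_Icc.prod isClosed_Icc).inter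
      (isClosed_le continuous_const continuous_arcd)
  have hKnonempty : Kset.Nonempty := by
    refine ⟨(0, 1/2), ⟨⟨by norm_num, by norm_num⟩, ?_⟩⟩
    show δ ≤ arcd 0 (1/2)
    have harc : arcd 0 (1/2) = 1/2 := by
      rw [arcd, show |(0:ℝ) - 1/2| = 1/2 by rw [abs_sub_comm]; simp]
      norm_num
    rw [harc]; exact hδhalf
  have hnormcont : Continuous fun p : ℝ × ℝ => ‖γ p.1 - γ p.2‖ :=
    ((hC2.continuous.comp continuous_fst).sub (hC2.continuous.comp continuous_snd)).norm
  obtain ⟨p0, hp0, hminOn⟩ := hKcompact.exists_isMinOn hKnonempty hnormcont.continuousOn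
  set m : ℝ := ‖γ p0.1 - γ p0.2‖ with hm
  have hm0 : 0 < m := by
    refine hpos p0 hp0.1 ?_
    exact lt_of_lt_of_le hδpos hp0.2
  -- dominating function
  set C : ℝ := max 1 α * 2 ^ α * K with hC
  have hC0 : 0 ≤ C := by positivity
  set g : ℝ × ℝ → ℝ := fun p => 1 / m ^ α + C * arcd p.1 p.2 ^ (2 - α) with hg
  have hg_int : IntegrableOn g sq := by
    refine ((integrableOn_const_iff (C := 1 / m ^ α)).mpr (Or.inr ?_)).add
      ((integrableOn_arcd_rpow (by linarith : (-1:ℝ) < 2 - α)).const_mul C)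
    exact (isCompact_Icc.prod isCompact_Icc).measure_lt_top
  -- measurability
  have hf_aesm : AEStronglyMeasurable
      (fun p : ℝ × ℝ => 1 / ‖γ p.1 - γ p.2‖ ^ α - 1 / arcd p.1 p.2 ^ α)
      (volume.restrict sq) := by
    have h1 : Measurable fun p : ℝ × ℝ => ‖γ p.1 - γ p.2‖ ^ α := by
      have heq : (fun p : ℝ × ℝ => ‖γ p.1 - γ p.2‖ ^ α)
          = (fun u : ℝ => |u| ^ α) ∘ (fun p : ℝ × ℝ => ‖γ p.1 - γ p.2‖) := by
        funext p; simp [abs_norm]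
      rw [heq]
      exact (measurable_abs_rpow α).comp hnormcont.measurable
    have h2 : AEStronglyMeasurable (fun p : ℝ × ℝ => 1 / arcd p.1 p.2 ^ α)
        (volume.restrict sq) := by
      have hmeas2 : Measurable fun p : ℝ × ℝ => (|arcd p.1 p.2| ^ α)⁻¹ :=
        ((measurable_abs_rpow α).comp continuous_arcd.measurable).inv
      refine hmeas2.aestronglyMeasurable.congr ?_
      filter_upwards [ae_restrict_mem hsqmeas] with p hp
      rw [abs_of_nonneg (arcd_nonneg (abs_sub_le_one hp.1 hp.2)), one_div]
    exact ((measurable_const.div h1).aestronglyMeasurable).sub h2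
  -- the pointwise bound
  refine hg_int.mono' hf_aesm ?_
  filter_upwards [ae_restrict_mem hsqmeas] with p hp
  set r : ℝ := ‖γ p.1 - γ p.2‖ with hr
  set d : ℝ := arcd p.1 p.2 with hd
  have hrd : r ≤ d := hchord_le p hp
  have hd0 : 0 ≤ d := arcd_nonneg (abs_sub_le_one hp.1 hp.2)
  have hgnn : 0 ≤ g p := by
    have : (0:ℝ) ≤ C * d ^ (2 - α) := mul_nonneg hC0 (Real.rpow_nonneg hd0 _)
    have h1 : (0:ℝ) ≤ 1 / m ^ α := by positivity
    simp only [hg]; linarith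
  rcases eq_or_lt_of_le hd0 with hdz | hdpos
  · -- d = 0 : the integrand is 0
    have hrz : r = 0 := by
      rw [hr, norm_eq_zero, sub_eq_zero]
      exact chord_eq_zero_of_arcd_zero hper (abs_sub_le_one hp.1 hp.2) hdz.symm
    have : (1 / r ^ α - 1 / d ^ α) = 0 := by
      rw [hrz, ← hdz, Real.zero_rpow (ne_of_gt hα0)]
      norm_num
    rw [Real.norm_eq_abs, this, abs_zero]
    exact hgnn
  · have hr0 : 0 < r := hpos p hp hdpos
    have hrα : 0 < r ^ α := Real.rpow_pos_of_pos hr0 α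
    have hdα : 0 < d ^ α := Real.rpow_pos_of_pos hdpos α
    have hfnn : 0 ≤ 1 / r ^ α - 1 / d ^ α := by
      have : r ^ α ≤ d ^ α := Real.rpow_le_rpow hr0.le hrd hα0.le
      have := one_div_le_one_div_of_le hrα this
      linarith
    rw [Real.norm_eq_abs, abs_of_nonneg hfnn]
    -- now show the bound
    rcases le_or_gt δ d with hcase | hcase
    · -- away from the diagonal: use the minimum m
      have hrm : m ≤ r := hminOn ⟨hp, hcase⟩
      have h1 : 1 / r ^ α ≤ 1 / m ^ α := by
        apply one_div_le_one_div_of_le (Real.rpow_pos_of_pos hm0 α)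
        exact Real.rpow_le_rpow hm0.le hrm hα0.le
      have h2 : (0:ℝ) ≤ C * d ^ (2 - α) := mul_nonneg hC0 (Real.rpow_nonneg hd0 _)
      have h3 : (0:ℝ) < 1 / d ^ α := by positivity
      simp only [hg]; linarith
    · -- near the diagonal: use the curvature bound
      have hlo : d - K * d ^ 3 ≤ r := hlow p hp
      have hr_half : d / 2 ≤ r := by
        nlinarith [mul_nonneg (mul_nonneg (mul_nonneg hK0 hdpos.le)
            (by linarith : (0:ℝ) ≤ δ - d)) (by linarith : (0:ℝ) ≤ δ + d),
          mul_nonneg (by linarith : (0:ℝ) ≤ 1/2 - K * δ ^ 2) hdpos.le]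
      have hkey := rpow_inv_diff_le hα0 hr0 hrd
      have hdr : d - r ≤ K * d ^ 3 := by linarith
      have hhalfα : (d / 2) ^ α ≤ r ^ α := Real.rpow_le_rpow (by positivity) hr_half hα0.le
      have hhalfpos : (0:ℝ) < (d / 2) ^ α := Real.rpow_pos_of_pos (by positivity) α
      have hA : 1 / r ^ α ≤ 2 ^ α / d ^ α := by
        have := one_div_le_one_div_of_le hhalfpos hhalfα
        rwa [Real.div_rpow hdpos.le (by norm_num : (0:ℝ) ≤ 2), one_div_div] at this
      have hB : (d - r) / d ≤ K * d ^ 2 := by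
        rw [div_le_iff₀ hdpos]
        nlinarith
      have hmax : (0:ℝ) ≤ max 1 α := le_trans zero_le_one (le_max_left _ _)
      have hchain : max 1 α * (1 / r ^ α) * ((d - r) / d)
          ≤ max 1 α * (2 ^ α / d ^ α) * (K * d ^ 2) := by
        have hBnn : (0:ℝ) ≤ (d - r) / d := div_nonneg (by linarith) hdpos.le
        have hAnn : (0:ℝ) ≤ 1 / r ^ α := by positivity
        have step1 : max 1 α * (1 / r ^ α) ≤ max 1 α * (2 ^ α / d ^ α) :=
          mul_le_mul_of_nonneg_left hA hmax
        exact mul_le_mul step1 hB hBnn (by positivity)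
      have heqC : max 1 α * (2 ^ α / d ^ α) * (K * d ^ 2) = C * d ^ (2 - α) := by
        rw [Real.rpow_sub hdpos, hC]
        rw [show d ^ (2:ℝ) = d ^ (2:ℕ) by
          rw [← Real.rpow_natCast d 2]; norm_num]
        field_simp
      have h3 : (0:ℝ) ≤ 1 / m ^ α := by positivity
      have : 1 / r ^ α - 1 / d ^ α ≤ C * d ^ (2 - α) := by
        calc 1 / r ^ α - 1 / d ^ α
            ≤ max 1 α * (1 / r ^ α) * ((d - r) / d) := hkey
          _ ≤ max 1 α * (2 ^ α / d ^ α) * (K * d ^ 2) := hchain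
          _ = C * d ^ (2 - α) := heqC
      simp only [hg]; linarith
end
end

section
/- Let α ≥ 2, let a ∈ (0, 1/2], and let M > 0. Then there exists ε > 0 such that for every C¹ injective closed curve γ: ℝ/ℤ → ℝ³ parametrized by arc length (|γ′| ≡ 1, total length 1): if there exist s, t ∈ ℝ/ℤ with d(s,t) ≥ a and |γ(s) − γ(t)| ≤ ε, then E^(α)(γ) ≥ M. (Self-repulsiveness of E^(α) for α ≥ 2: the energy blows up as a knot degenerates to a singular knot with a double point.) -/
open MeasureTheory

noncomputable section

/- Auxiliary lemmas -/

lemma arcd_lb (s t u v : ℝ) : arcd s t - |u - s| - |v - t| ≤ arcd u v := by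
  unfold arcd
  have hd1 : |s - t| - (|u - s| + |v - t|) ≤ |u - v| := by
    have h1 : |s - t| - |u - v| ≤ |(s - t) - (u - v)| := abs_sub_abs_le_abs_sub _ _
    have h2 : |(s - t) - (u - v)| ≤ |u - s| + |v - t| := by
      have he : (s - t) - (u - v) = (s - u) + (v - t) := by ring
      rw [he]
      refine (abs_add_le _ _).trans ?_
      rw [abs_sub_comm s u]
    linarith
  have hd2 : |u - v| ≤ |s - t| + (|u - s| + |v - t|) := by
    have h1 : |u - v| - |s - t| ≤ |(u - v) - (s - t)| := abs_sub_abs_le_abs_sub _ _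
    have h2 : |(u - v) - (s - t)| ≤ |u - s| + |v - t| := by
      have he : (u - v) - (s - t) = (u - s) + (t - v) := by ring
      rw [he]
      refine (abs_add_le _ _).trans ?_
      rw [abs_sub_comm t v]
    linarith
  have ha := min_le_left |s - t| (1 - |s - t|)
  have hb := min_le_right |s - t| (1 - |s - t|)
  refine le_min (by linarith) (by linarith)

lemma exists_sign {s : ℝ} (hs : s ∈ Set.Icc (0:ℝ) 1) :
    ∃ e : ℝ, (e = 1 ∨ e = -1) ∧
      ∀ x ∈ Set.Icc (0:ℝ) (1/4 : ℝ), s + e * x ∈ Set.Icc (0:ℝ) 1 := by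
  obtain ⟨hs0, hs1⟩ := hs
  rcases le_or_gt s (1/2) with h | h
  · refine ⟨1, Or.inl rfl, fun x hx => ?_⟩
    obtain ⟨hx0, hx1⟩ := hx
    constructor <;> [skip; skip] <;> simp only [one_mul] <;> linarith
  · refine ⟨-1, Or.inr rfl, fun x hx => ?_⟩
    obtain ⟨hx0, hx1⟩ := hx
    constructor <;> [skip; skip] <;> simp only [neg_one_mul] <;> linarith

lemma vol_pre (e s p q : ℝ) (he : e = 1 ∨ e = -1) (hpq : p ≤ q) :
    volume {u : ℝ | e * (u - s) ∈ Set.Ico p q} = ENNReal.ofReal (q - p) := by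
  rcases he with rfl | rfl
  · have hset : {u : ℝ | 1 * (u - s) ∈ Set.Ico p q} = Set.Ico (s + p) (s + q) := by
      ext u
      simp only [Set.mem_setOf_eq, Set.mem_Ico, one_mul]
      constructor <;> rintro ⟨h1, h2⟩ <;> constructor <;> linarith
    rw [hset, Real.volume_Ico]
    congr 1
    ring
  · have hset : {u : ℝ | (-1) * (u - s) ∈ Set.Ico p q} = Set.Ioc (s - q) (s - p) := by
      ext u
      simp only [Set.mem_setOf_eq, Set.mem_Ico, neg_one_mul, Set.mem_Ioc]
      constructor <;> rintro ⟨h1, h2⟩ <;> constructor <;> linarith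
    rw [hset, Real.volume_Ioc]
    congr 1
    ring

lemma sum_lintegral_le {f : ℝ × ℝ → ENNReal} {A : ℕ → Set (ℝ × ℝ)} {S : Set (ℝ × ℝ)}
    {N : ℕ}
    (hm : ∀ k, MeasurableSet (A k)) (hd : ∀ k l, k < l → Disjoint (A k) (A l))
    (hS : ∀ k < N, A k ⊆ S) :
    ∑ k ∈ Finset.range N, ∫⁻ x in A k, f x ≤ ∫⁻ x in S, f x := by
  have key : ∀ n, ∑ k ∈ Finset.range n, ∫⁻ x in A k, f x
      = ∫⁻ x in ⋃ k ∈ Finset.range n, A k, f x := by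
    intro n
    induction n with
    | zero => simp
    | succ n ih =>
      have hU : (⋃ k ∈ Finset.range (n+1), A k)
          = (⋃ k ∈ Finset.range n, A k) ∪ A n := by
        ext x
        simp only [Set.mem_iUnion, Finset.mem_range, Set.mem_union, Nat.lt_succ_iff_lt_or_eq]
        constructor
        · rintro ⟨k, hk | rfl, hx⟩
          · exact Or.inl ⟨k, hk, hx⟩
          · exact Or.inr hx
        · rintro (⟨k, hk, hx⟩ | hx)
          · exact ⟨k, Or.inl hk, hx⟩
          · exact ⟨n, Or.inr rfl, hx⟩
      have hdisj : Disjoint (⋃ k ∈ Finset.range n, A k) (A n) := by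
        simp only [Set.disjoint_iUnion_left]
        intro k hk
        exact hd k n (Finset.mem_range.mp hk)
      rw [Finset.sum_range_succ, ih, hU, lintegral_union (hm n) hdisj]
  rw [key N]
  refine lintegral_mono_set ?_
  intro x hx
  simp only [Set.mem_iUnion, Finset.mem_range] at hx
  obtain ⟨k, hk, hx⟩ := hx
  exact hS k hk hx

set_option maxHeartbeats 2000000 in
/-- Self-repulsiveness of `E^(α)` for `α ≥ 2`: given `α ≥ 2`, `a ∈ (0, 1/2]` and `M > 0`,
there is `ε > 0` such that every unit-speed C¹ knot of length 1 possessing a pair of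
points at arc-length distance at least `a` but chord distance at most `ε` has
`E^(α)`-energy at least `M`. -/
theorem Ealpha_self_repulsive (α : ℝ) (hα : 2 ≤ α) (a : ℝ)
    (ha : a ∈ Set.Ioc (0:ℝ) (1/2)) (M : ℝ) (hM : 0 < M) :
    ∃ ε > (0:ℝ), ∀ γ : ℝ → E3,
      ContDiff ℝ 1 γ →
      Function.Periodic γ 1 →
      (∀ s t : ℝ, γ s = γ t → ∃ n : ℤ, s - t = n) →
      (∀ s : ℝ, ‖deriv γ s‖ = 1) →
      (∃ s ∈ Set.Icc (0:ℝ) 1, ∃ t ∈ Set.Icc (0:ℝ) 1,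
        a ≤ arcd s t ∧ ‖γ s - γ t‖ ≤ ε) →
      ENNReal.ofReal M ≤
        ∫⁻ p in Set.Icc (0:ℝ) 1 ×ˢ Set.Icc (0:ℝ) 1,
          ENNReal.ofReal (1 / ‖γ p.1 - γ p.2‖ ^ α - 1 / arcd p.1 p.2 ^ α) := by
  obtain ⟨ha0, ha2⟩ := ha
  have hα0 : (0:ℝ) ≤ α := by linarith
  set C : ℝ := ((a/2) ^ α)⁻¹ with hCdef
  have hCpos : 0 < C := by
    have : 0 < (a/2) ^ α := Real.rpow_pos_of_pos (by linarith) α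
    positivity
  set N : ℕ := ⌈(128:ℝ) * M⌉₊ + 1 with hNdef
  set δ : ℝ := min (a/4) (min (1/8) (1/(128*C+128))) with hδdef
  have hδpos : 0 < δ := by
    refine lt_min (by linarith) (lt_min (by norm_num) (by positivity))
  have hδa : δ ≤ a/4 := min_le_left _ _
  have hδ8 : δ ≤ 1/8 := le_trans (min_le_right _ _) (min_le_left _ _)
  have hδC : δ ≤ 1/(128*C+128) := le_trans (min_le_right _ _) (min_le_right _ _)
  have hCδ : C * (δ * δ) ≤ 1/128 := by
    have hpos : (0:ℝ) < 128*C+128 := by positivity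
    have h1 : δ * (128*C+128) ≤ 1 := by
      rw [← le_div_iff₀ hpos]
      exact hδC
    nlinarith [hδpos.le, hCpos.le, hδ8]
  set ε : ℝ := δ / 2 ^ N with hεdef
  have hεpos : 0 < ε := by positivity
  refine ⟨ε, hεpos, ?_⟩
  rintro γ hγ hper hinj hspeed ⟨s, hs, t, ht, hdst, hclose⟩
  -- γ is 1-Lipschitz
  have hlip : ∀ u w : ℝ, ‖γ u - γ w‖ ≤ |u - w| := by
    have hdiff : Differentiable ℝ γ := hγ.differentiable one_ne_zero
    have hL : LipschitzWith 1 γ := by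
      refine lipschitzWith_of_nnnorm_deriv_le hdiff fun x => ?_
      rw [← NNReal.coe_le_coe, coe_nnnorm, hspeed x, NNReal.coe_one]
    intro u w
    have := hL.dist_le_mul u w
    rwa [dist_eq_norm, Real.dist_eq, NNReal.coe_one, one_mul] at this
  -- radii
  set r : ℕ → ℝ := fun k => ε * 2 ^ k with hrdef
  have hrpos : ∀ k, 0 < r k := fun k => by positivity
  have hrmono : ∀ k l, k ≤ l → r k ≤ r l := by
    intro k l hkl
    have : (2:ℝ) ^ k ≤ 2 ^ l := pow_le_pow_right₀ (by norm_num) hkl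
    exact mul_le_mul_of_nonneg_left this hεpos.le
  have hrN : r N = δ := by
    simp only [hrdef, hεdef]
    field_simp
  have hrle : ∀ k, k ≤ N → r k ≤ δ := fun k hk => hrN ▸ hrmono k N hk
  -- signs and interval families
  obtain ⟨es, hes, hesmem⟩ := exists_sign hs
  obtain ⟨et, het, hetmem⟩ := exists_sign ht
  set Is : ℕ → Set ℝ := fun k => {u | es * (u - s) ∈ Set.Ico (r k) (r (k+1))} with hIsdef
  set It : ℕ → Set ℝ := fun k => {v | et * (v - t) ∈ Set.Ico (r k) (r (k+1))} with hItdef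
  set A : ℕ → Set (ℝ × ℝ) := fun k => Is k ×ˢ It k with hAdef
  -- basic facts about membership
  have habs : ∀ (e w : ℝ) (k : ℕ) (u : ℝ), (e = 1 ∨ e = -1) →
      e * (u - w) ∈ Set.Ico (r k) (r (k+1)) →
      r k ≤ |u - w| ∧ |u - w| ≤ r (k+1) := by
    intro e w k u he hu
    obtain ⟨h1, h2⟩ := hu
    have h0 : 0 ≤ e * (u - w) := le_trans (hrpos k).le h1
    have habs : |u - w| = e * (u - w) := by
      rcases he with rfl | rfl
      · rw [one_mul] at h0 ⊢; exact abs_of_nonneg h0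
      · rw [neg_one_mul] at h0 ⊢
        rw [abs_of_nonpos (by linarith)]
    exact ⟨habs ▸ h1, habs ▸ h2.le⟩
  have hmemIcc : ∀ (e w : ℝ) (k : ℕ) (u : ℝ), k < N → (e = 1 ∨ e = -1) →
      (∀ x ∈ Set.Icc (0:ℝ) (1/4 : ℝ), w + e * x ∈ Set.Icc (0:ℝ) 1) →
      e * (u - w) ∈ Set.Ico (r k) (r (k+1)) → u ∈ Set.Icc (0:ℝ) 1 := by
    intro e w k u hkN he hmem hu
    obtain ⟨h1, h2⟩ := hu
    have h0 : 0 ≤ e * (u - w) := le_trans (hrpos k).le h1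
    have h4 : e * (u - w) ≤ 1/4 := by
      have : r (k+1) ≤ δ := hrle (k+1) hkN
      linarith
    have := hmem (e * (u - w)) ⟨h0, h4⟩
    have heq : w + e * (e * (u - w)) = u := by
      rcases he with rfl | rfl <;> ring
    rwa [heq] at this
  -- measurability and disjointness
  have hmeas : ∀ k, MeasurableSet (A k) := by
    intro k
    have h1 : MeasurableSet (Is k) :=
      (measurableSet_Ico.preimage ((measurable_id.sub measurable_const).const_mul es))
    have h2 : MeasurableSet (It k) :=
      (measurableSet_Ico.preimage ((measurable_id.sub measurable_const).const_mul et))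
    exact h1.prod h2
  have hdisj : ∀ k l, k < l → Disjoint (A k) (A l) := by
    intro k l hkl
    have hIco : Disjoint (Set.Ico (r k) (r (k+1))) (Set.Ico (r l) (r (l+1))) := by
      rw [Set.Ico_disjoint_Ico]
      exact le_trans (min_le_left _ _) (le_trans (hrmono _ _ hkl) (le_max_right _ _))
    rw [Set.disjoint_left]
    rintro ⟨u, v⟩ ⟨hu1, _⟩ ⟨hu2, _⟩
    exact Set.disjoint_left.1 hIco hu1 hu2
  have hsub : ∀ k, k < N → A k ⊆ Set.Icc (0:ℝ) 1 ×ˢ Set.Icc (0:ℝ) 1 := by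
    intro k hk
    rintro ⟨u, v⟩ ⟨hu, hv⟩
    exact ⟨hmemIcc es s k u hk hes hesmem hu, hmemIcc et t k v hk het hetmem hv⟩
  -- volume of the squares
  have hvol : ∀ k, volume (A k) = ENNReal.ofReal (r (k+1) - r k) * ENNReal.ofReal (r (k+1) - r k) := by
    intro k
    have hvIs : volume (Is k) = ENNReal.ofReal (r (k+1) - r k) :=
      vol_pre es s (r k) (r (k+1)) hes (hrmono k (k+1) (Nat.le_succ k))
    have hvIt : volume (It k) = ENNReal.ofReal (r (k+1) - r k) :=
      vol_pre et t (r k) (r (k+1)) het (hrmono k (k+1) (Nat.le_succ k))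
    rw [hAdef]
    rw [Measure.volume_eq_prod, Measure.prod_prod, hvIs, hvIt]
  -- per-square lower bound
  have hmain : ∀ k ∈ Finset.range N, ENNReal.ofReal ((1:ℝ)/128) ≤
      ∫⁻ p in A k, ENNReal.ofReal (1 / ‖γ p.1 - γ p.2‖ ^ α - 1 / arcd p.1 p.2 ^ α) := by
    intro k hk
    rw [Finset.mem_range] at hk
    set w : ℝ := ε * 2 ^ k with hwdef
    have hwpos : 0 < w := by positivity
    have hw2δ : 2 * w ≤ δ := by
      have : r (k+1) ≤ δ := hrle (k+1) hk
      have hr1 : r (k+1) = 2 * w := by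
        simp only [hrdef, hwdef, pow_succ]; ring
      linarith
    have hwδ : w ≤ δ := by linarith
    set B : ℝ := 8 * w with hBdef
    have hBpos : 0 < B := by positivity
    have hB1 : B ≤ 1/2 := by
      have : B ≤ 4 * δ := by rw [hBdef]; linarith
      linarith [hδ8]
    set c : ℝ := 1/(B*B) - C with hcdef
    have hεw : ε ≤ w := by
      have h20 : (2:ℝ) ^ 0 ≤ 2 ^ k := pow_le_pow_right₀ (by norm_num) (Nat.zero_le k)
      rw [pow_zero] at h20
      nlinarith
    -- pointwise bound on A k
    have hpt : ∀ p ∈ A k, ENNReal.ofReal c ≤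
        ENNReal.ofReal (1 / ‖γ p.1 - γ p.2‖ ^ α - 1 / arcd p.1 p.2 ^ α) := by
      rintro ⟨u, v⟩ ⟨hu, hv⟩
      apply ENNReal.ofReal_le_ofReal
      obtain ⟨hx1, hx2⟩ := habs es s k u hes hu
      obtain ⟨hy1, hy2⟩ := habs et t k v het hv
      have hr1 : r (k+1) = 2 * w := by
        simp only [hrdef, hwdef, pow_succ]; ring
      rw [hr1] at hx2 hy2
      -- chord bound
      have hchord : ‖γ u - γ v‖ ≤ B := by
        have hsplit : ‖γ u - γ v‖ ≤ ‖γ u - γ s‖ + ‖γ s - γ t‖ + ‖γ t - γ v‖ := by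
          have heq : γ u - γ v = (γ u - γ s) + (γ s - γ t) + (γ t - γ v) := by abel
          rw [heq]
          exact norm_add₃_le
        have h1 : ‖γ u - γ s‖ ≤ |u - s| := hlip u s
        have h2 : ‖γ t - γ v‖ ≤ |v - t| := by
          rw [norm_sub_rev]
          exact hlip v t
        rw [hBdef]
        calc ‖γ u - γ v‖ ≤ |u - s| + ε + |v - t| := by linarith
          _ ≤ 2*w + w + 2*w := by linarith
          _ ≤ 8 * w := by linarith
      -- arcd lower bound
      have harcd : a/2 ≤ arcd u v := by
        have := arcd_lb s t u v
        have h1 : |u - s| ≤ δ := by linarith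
        have h2 : |v - t| ≤ δ := by linarith
        have haδ : a - 2*δ ≥ a/2 := by linarith [hδa]
        linarith
      have harcdpos : 0 < arcd u v := by linarith
      -- chord positivity
      have huIcc : u ∈ Set.Icc (0:ℝ) 1 := hmemIcc es s k u hk hes hesmem hu
      have hvIcc : v ∈ Set.Icc (0:ℝ) 1 := hmemIcc et t k v hk het hetmem hv
      have hchordpos : 0 < ‖γ u - γ v‖ := by
        rcases eq_or_lt_of_le (norm_nonneg (γ u - γ v)) with h0 | h0
        · exfalso
          have hγeq : γ u = γ v := by
            have : ‖γ u - γ v‖ = 0 := h0.symm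
            rwa [norm_eq_zero, sub_eq_zero] at this
          obtain ⟨n, hn⟩ := hinj u v hγeq
          have hb1 : (-1:ℝ) ≤ (n:ℝ) := by
            rw [← hn]; linarith [huIcc.1, huIcc.2, hvIcc.1, hvIcc.2]
          have hb2 : (n:ℝ) ≤ 1 := by
            rw [← hn]; linarith [huIcc.1, huIcc.2, hvIcc.1, hvIcc.2]
          have hb1' : (-1:ℤ) ≤ n := by exact_mod_cast hb1
          have hb2' : n ≤ (1:ℤ) := by exact_mod_cast hb2
          have harcd0 : arcd u v = 0 := by
            have huv : |u - v| = |(n:ℝ)| := by rw [hn]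
            unfold arcd
            rw [huv]
            interval_cases n <;> norm_num
          rw [harcd0] at harcdpos
          exact lt_irrefl 0 harcdpos
        · exact h0
      -- main inequality
      have hC2 : 1 / arcd u v ^ α ≤ C := by
        have hr : (a/2) ^ α ≤ arcd u v ^ α :=
          Real.rpow_le_rpow (by linarith) harcd hα0
        have hp : 0 < (a/2) ^ α := Real.rpow_pos_of_pos (by linarith) α
        rw [hCdef, ← one_div]
        exact one_div_le_one_div_of_le hp hr
      have hB2 : 1 / (B*B) ≤ 1 / ‖γ u - γ v‖ ^ α := by
        have h1 : ‖γ u - γ v‖ ^ α ≤ ‖γ u - γ v‖ ^ (2:ℝ) :=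
          Real.rpow_le_rpow_of_exponent_ge hchordpos (by linarith) hα
        have h2 : ‖γ u - γ v‖ ^ (2:ℝ) = ‖γ u - γ v‖ * ‖γ u - γ v‖ := by
          rw [Real.rpow_two]; ring
        have h3 : ‖γ u - γ v‖ * ‖γ u - γ v‖ ≤ B * B :=
          mul_le_mul hchord hchord hchordpos.le hBpos.le
        have hp : 0 < ‖γ u - γ v‖ ^ α := Real.rpow_pos_of_pos hchordpos α
        have h4 : ‖γ u - γ v‖ ^ α ≤ B * B := h1.trans (le_of_eq h2 |>.trans h3)
        exact one_div_le_one_div_of_le hp h4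
      rw [hcdef]
      have : (1:ℝ) / (B*B) - C ≤ 1 / ‖γ u - γ v‖ ^ α - 1 / arcd u v ^ α := by linarith
      exact this
    -- integrate the bound
    have hint : ENNReal.ofReal c * volume (A k) ≤
        ∫⁻ p in A k, ENNReal.ofReal (1 / ‖γ p.1 - γ p.2‖ ^ α - 1 / arcd p.1 p.2 ^ α) := by
      rw [← setLIntegral_const (A k) (ENNReal.ofReal c)]
      exact setLIntegral_mono' (hmeas k) hpt
    refine le_trans ?_ hint
    rw [hvol k]
    have hrw : r (k+1) - r k = w := by
      simp only [hrdef, hwdef, pow_succ]; ring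
    rw [hrw]
    have hBw : B * B = 64 * (w * w) := by rw [hBdef]; ring
    have hww : w * w ≤ δ * δ := mul_le_mul hwδ hwδ hwpos.le hδpos.le
    have hCw : C * (w * w) ≤ 1/128 :=
      le_trans (mul_le_mul_of_nonneg_left hww hCpos.le) hCδ
    have hCb : C ≤ 1/(128 * (w * w)) := by
      rw [le_div_iff₀ (by positivity)]
      nlinarith [hCw]
    have hcpos : 0 ≤ c := by
      rw [hcdef, hBw]
      have h4 : 1/(128*(w*w)) ≤ 1/(64*(w*w)) := by
        apply one_div_le_one_div_of_le (by positivity)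
        nlinarith [hwpos.le]
      linarith
    rw [← ENNReal.ofReal_mul hwpos.le, ← ENNReal.ofReal_mul hcpos]
    apply ENNReal.ofReal_le_ofReal
    have hexp : c * (w * w) = 1/64 - C * (w * w) := by
      rw [hcdef, hBw]
      field_simp
    rw [hexp]
    linarith
  -- sum up
  calc ENNReal.ofReal M
      ≤ ∑ k ∈ Finset.range N, ENNReal.ofReal ((1:ℝ)/128) := by
        rw [Finset.sum_const, Finset.card_range, nsmul_eq_mul]
        have hNM : M ≤ (N:ℝ) * (1/128) := by
          have h1 : (128:ℝ) * M ≤ (⌈(128:ℝ)*M⌉₊ : ℝ) := Nat.le_ceil _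
          have h2 : ((⌈(128:ℝ)*M⌉₊ : ℕ) : ℝ) ≤ (N:ℝ) := by
            rw [hNdef]; push_cast; linarith
          nlinarith
        calc ENNReal.ofReal M ≤ ENNReal.ofReal ((N:ℝ) * (1/128)) :=
              ENNReal.ofReal_le_ofReal hNM
          _ = (N : ENNReal) * ENNReal.ofReal ((1:ℝ)/128) := by
              rw [ENNReal.ofReal_mul (by positivity), ENNReal.ofReal_natCast]
    _ ≤ ∑ k ∈ Finset.range N, ∫⁻ p in A k,
          ENNReal.ofReal (1 / ‖γ p.1 - γ p.2‖ ^ α - 1 / arcd p.1 p.2 ^ α) :=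
        Finset.sum_le_sum hmain
    _ ≤ ∫⁻ p in Set.Icc (0:ℝ) 1 ×ˢ Set.Icc (0:ℝ) 1,
          ENNReal.ofReal (1 / ‖γ p.1 - γ p.2‖ ^ α - 1 / arcd p.1 p.2 ^ α) :=
        sum_lintegral_le hmeas hdisj hsub
end
end

section
/- Let m = n+2 ≥ 2, let J = diag(−1, 1, …, 1) ∈ M_m(ℝ), and let 1 ≤ k ≤ m. If A ∈ M_m(ℝ) satisfies AᵀJA = J (i.e. A ∈ O(n+1,1)), then the k-th compound matrix Ψ_k(A) satisfies Ψ_k(A)ᵀ J̃ Ψ_k(A) = J̃, where J̃ is the diagonal matrix indexed by k-element subsets I ⊆ {0, 1, …, m−1} with J̃_{I,I} = +1 if 0 ∈ I and J̃_{I,I} = −1 if 0 ∉ I. In particular Ψ_k(A) ∈ O(N₂, N₁) with N₁ = C(n+1, k) and N₂ = C(n+1, k−1). -/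
open Matrix Finset

noncomputable section

/-- The `k`-th compound matrix of an `m × m` real matrix `A`: its rows and columns are
indexed by `k`-element subsets of `Fin m` and its `(I,J)` entry is the determinant of
the `k × k` submatrix of `A` with rows `I` and columns `J` (in increasing order). -/
def compound (m k : ℕ) (A : Matrix (Fin m) (Fin m) ℝ) :
    Matrix {I : Finset (Fin m) // I.card = k} {I : Finset (Fin m) // I.card = k} ℝ :=
  fun I J => Matrix.det (Matrix.of fun a b : Fin k =>
    A (I.1.orderIsoOfFin I.2 a) (J.1.orderIsoOfFin J.2 b))

namespace CompoundAux

variable {m k : ℕ}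

/-- strictly monotone enumeration of a `k`-subset of `Fin m` -/
def emb (S : {I : Finset (Fin m) // I.card = k}) (i : Fin k) : Fin m :=
  S.1.orderIsoOfFin S.2 i

lemma emb_mem (S : {I : Finset (Fin m) // I.card = k}) (i : Fin k) : emb S i ∈ S.1 :=
  (S.1.orderIsoOfFin S.2 i).2

lemma emb_injective (S : {I : Finset (Fin m) // I.card = k}) : Function.Injective (emb S) :=
  fun a b h => (S.1.orderIsoOfFin S.2).injective (Subtype.ext h)

lemma image_emb (S : {I : Finset (Fin m) // I.card = k}) :
    Finset.image (emb S) Finset.univ = S.1 := by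
  ext a
  simp only [mem_image, mem_univ, true_and]
  constructor
  · rintro ⟨i, rfl⟩; exact emb_mem S i
  · intro ha
    exact ⟨(S.1.orderIsoOfFin S.2).symm ⟨a, ha⟩, by simp [emb]⟩

/-- the parametrization of injective maps `Fin k → Fin m` -/
def jmap (p : {I : Finset (Fin m) // I.card = k} × Equiv.Perm (Fin k)) : Fin k → Fin m :=
  fun i => emb p.1 (p.2 i)

lemma image_jmap (p : {I : Finset (Fin m) // I.card = k} × Equiv.Perm (Fin k)) :
    Finset.image (jmap p) Finset.univ = p.1.1 := by
  have : Finset.image (jmap p) Finset.univ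
      = Finset.image (emb p.1) (Finset.image p.2 Finset.univ) := by
    rw [Finset.image_image]; rfl
  rw [this, Finset.image_univ_equiv, image_emb]

lemma jmap_injective :
    Function.Injective (jmap (m := m) (k := k)) := by
  rintro ⟨S, σ⟩ ⟨T, τ⟩ h
  have hST : S = T := by
    apply Subtype.ext
    rw [← image_jmap (S, σ), ← image_jmap (T, τ), h]
  subst hST
  have hστ : σ = τ := Equiv.ext fun i => emb_injective S (congrFun h i)
  rw [hστ]

lemma jmap_inj_fn (p) : Function.Injective (jmap (m := m) (k := k) p) :=
  (emb_injective p.1).comp p.2.injective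

lemma exists_jmap {r : Fin k → Fin m} (hr : Function.Injective r) :
    ∃ p, jmap p = r := by
  refine ⟨⟨⟨Finset.image r Finset.univ, by
    rw [Finset.card_image_of_injective _ hr, Finset.card_univ, Fintype.card_fin]⟩, ?_⟩, ?_⟩
  · set S : Finset (Fin m) := Finset.image r Finset.univ with hS
    have hcard : S.card = k := by
      rw [hS, Finset.card_image_of_injective _ hr, Finset.card_univ, Fintype.card_fin]
    have hmem : ∀ i, r i ∈ S := fun i => Finset.mem_image_of_mem r (Finset.mem_univ i)
    have ginj : Function.Injective (fun i => (S.orderIsoOfFin hcard).symm ⟨r i, hmem i⟩) := by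
      intro a b hab
      apply hr
      have := congrArg (fun x => ((S.orderIsoOfFin hcard) x : Fin m)) hab
      simpa using this
    exact Equiv.ofBijective _ (Finite.injective_iff_bijective.mp ginj)
  · funext i
    simp [jmap, emb, Equiv.ofBijective_apply]

/-- Cauchy–Binet -/
theorem cauchyBinet (M : Matrix (Fin k) (Fin m) ℝ) (N : Matrix (Fin m) (Fin k) ℝ) :
    (M * N).det = ∑ S : {I : Finset (Fin m) // I.card = k},
      (M.submatrix id (emb S)).det * (N.submatrix (emb S) id).det := by
  classical
  -- step 1: expand by multilinearity
  have h1 : (M * N).det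
      = ∑ r : Fin k → Fin m, (∏ i, M i (r i)) * (N.submatrix r id).det := by
    have hrow : (M * N) = fun i => ∑ j : Fin m, M i j • N j := by
      funext i j
      simp [Matrix.mul_apply, Finset.sum_apply]
    have : (M * N).det = detRowAlternating (R := ℝ) (n := Fin k) (M * N) := rfl
    rw [this, hrow]
    rw [show (detRowAlternating (R := ℝ) (n := Fin k)
        (fun i => ∑ j : Fin m, M i j • N j) : ℝ)
      = (detRowAlternating (R := ℝ) (n := Fin k)).toMultilinearMap
        (fun i => ∑ j : Fin m, (fun j => M i j • N j) j) from rfl]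
    rw [MultilinearMap.map_sum]
    refine Finset.sum_congr rfl fun r _ => ?_
    have := (detRowAlternating (R := ℝ) (n := Fin k)).toMultilinearMap.map_smul_univ
      (fun i => M i (r i)) (fun i => N (r i))
    simp [smul_eq_mul] at this
    exact this
  rw [h1]
  -- step 2: kill non-injective terms, reindex by jmap
  have h2 : ∀ r : Fin k → Fin m, ¬ Function.Injective r →
      (∏ i, M i (r i)) * (N.submatrix r id).det = 0 := by
    intro r hr
    rw [Function.not_injective_iff] at hr
    obtain ⟨a, b, hab, hne⟩ := hr
    rw [Matrix.det_zero_of_row_eq hne (funext fun j => by simp [Matrix.submatrix_apply, hab]),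
      mul_zero]
  have h3 : ∑ r : Fin k → Fin m, (∏ i, M i (r i)) * (N.submatrix r id).det
      = ∑ r ∈ Finset.image jmap Finset.univ,
        (∏ i, M i (r i)) * (N.submatrix r id).det := by
    refine (Finset.sum_subset (Finset.subset_univ _) fun r _ hr => ?_).symm
    apply h2
    intro hinj
    obtain ⟨p, hp⟩ := exists_jmap hinj
    exact hr (hp ▸ Finset.mem_image_of_mem jmap (Finset.mem_univ p))
  rw [h3, Finset.sum_image (fun p _ q _ h => jmap_injective h)]
  rw [Fintype.sum_prod_type]
  refine Finset.sum_congr rfl fun S _ => ?_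
  -- step 3: per-subset, collect permutations into det of M-block
  have hdetM : (M.submatrix id (emb S)).det
      = ∑ σ : Equiv.Perm (Fin k), Equiv.Perm.sign σ • ∏ i, M i (emb S (σ i)) := by
    rw [← Matrix.det_transpose, Matrix.det_apply]
    rfl
  have hperm : ∀ σ : Equiv.Perm (Fin k),
      (N.submatrix (jmap (S, σ)) id).det
        = Equiv.Perm.sign σ * (N.submatrix (emb S) id).det := by
    intro σ
    have : N.submatrix (jmap (S, σ)) id = (N.submatrix (emb S) id).submatrix σ id := rfl
    rw [this, Matrix.det_permute]
  calc ∑ σ : Equiv.Perm (Fin k),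
        (∏ i, M i (jmap (S, σ) i)) * (N.submatrix (jmap (S, σ)) id).det
      = ∑ σ : Equiv.Perm (Fin k),
        (Equiv.Perm.sign σ • ∏ i, M i (emb S (σ i))) * (N.submatrix (emb S) id).det := by
        refine Finset.sum_congr rfl fun σ _ => ?_
        rw [hperm σ]
        simp [jmap, Units.smul_def, zsmul_eq_mul]
        ring
    _ = (M.submatrix id (emb S)).det * (N.submatrix (emb S) id).det := by
        rw [hdetM, Finset.sum_mul]

end CompoundAux

open CompoundAux

namespace CompoundAux

lemma compound_mul (m k : ℕ) (A B : Matrix (Fin m) (Fin m) ℝ) :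
    compound m k (A * B) = compound m k A * compound m k B := by
  ext I J
  have h1 : compound m k (A * B) I J
      = ((A.submatrix (emb I) id) * (B.submatrix id (emb J))).det := by
    show (Matrix.of fun a b : Fin k => (A * B) (emb I a) (emb J b)).det = _
    congr 1
  rw [h1, cauchyBinet, Matrix.mul_apply]
  refine Finset.sum_congr rfl fun S _ => ?_
  rfl

lemma compound_transpose (m k : ℕ) (A : Matrix (Fin m) (Fin m) ℝ) :
    compound m k Aᵀ = (compound m k A)ᵀ := by
  ext I J
  show (Matrix.of fun a b : Fin k => Aᵀ (emb I a) (emb J b)).det = compound m k A J I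
  rw [← Matrix.det_transpose]
  rfl

lemma compound_diagonal (m k : ℕ) (d : Fin m → ℝ) :
    compound m k (Matrix.diagonal d)
      = Matrix.diagonal (fun I : {I : Finset (Fin m) // I.card = k} => ∏ i ∈ I.1, d i) := by
  ext I J
  rcases eq_or_ne I J with rfl | hIJ
  · rw [Matrix.diagonal_apply_eq]
    show (Matrix.of fun a b : Fin k => Matrix.diagonal d (emb I a) (emb I b)).det = _
    have h1 : (Matrix.of fun a b : Fin k => Matrix.diagonal d (emb I a) (emb I b))
        = Matrix.diagonal (fun a => d (emb I a)) := by
      ext a b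
      rcases eq_or_ne a b with rfl | hab
      · simp
      · rw [Matrix.of_apply, Matrix.diagonal_apply_ne _ (fun h => hab (emb_injective I h)),
          Matrix.diagonal_apply_ne _ hab]
    rw [h1, Matrix.det_diagonal, ← image_emb I,
      Finset.prod_image (fun a _ b _ h => emb_injective I h)]
  · rw [Matrix.diagonal_apply_ne _ hIJ]
    have hsub : ¬ I.1 ⊆ J.1 := fun hs =>
      hIJ (Subtype.ext (Finset.eq_of_subset_of_card_le hs (by rw [I.2, J.2])))
    obtain ⟨i, hiI, hiJ⟩ := Finset.not_subset.mp hsub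
    apply Matrix.det_eq_zero_of_row_eq_zero ((I.1.orderIsoOfFin I.2).symm ⟨i, hiI⟩)
    intro j
    show Matrix.diagonal d (emb I ((I.1.orderIsoOfFin I.2).symm ⟨i, hiI⟩)) (emb J j) = 0
    have h1 : emb I ((I.1.orderIsoOfFin I.2).symm ⟨i, hiI⟩) = i := by simp [emb]
    rw [h1, Matrix.diagonal_apply_ne]
    intro h
    exact hiJ (h ▸ emb_mem J j)

end CompoundAux

/-- If `A ∈ O(n+1,1)`, i.e. `AᵀJA = J` with `J = diag(−1,1,…,1)`, then the `k`-th
compound matrix `Ψ_k(A)` satisfies `Ψ_k(A)ᵀ J̃ Ψ_k(A) = J̃`, where `J̃` is diagonal with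
entry `+1` at a `k`-subset `I` containing `0` and `−1` otherwise; in particular
`Ψ_k(A) ∈ O(N₂, N₁)` with `N₁ = C(n+1,k)`, `N₂ = C(n+1,k−1)`. -/
theorem compound_preserves_induced_form (n k : ℕ) (hk1 : 1 ≤ k) (hk : k ≤ n + 2)
    (A : Matrix (Fin (n + 2)) (Fin (n + 2)) ℝ)
    (hA : Aᵀ * Matrix.diagonal (fun i : Fin (n + 2) => if i = 0 then (-1 : ℝ) else 1) * A =
        Matrix.diagonal (fun i : Fin (n + 2) => if i = 0 then (-1 : ℝ) else 1)) :
    (compound (n + 2) k A)ᵀ *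
        Matrix.diagonal (fun I : {I : Finset (Fin (n + 2)) // I.card = k} =>
          if (0 : Fin (n + 2)) ∈ I.1 then (1 : ℝ) else -1) *
        compound (n + 2) k A =
      Matrix.diagonal (fun I : {I : Finset (Fin (n + 2)) // I.card = k} =>
        if (0 : Fin (n + 2)) ∈ I.1 then (1 : ℝ) else -1) := by
  have hC := congrArg (compound (n + 2) k) hA
  rw [CompoundAux.compound_mul, CompoundAux.compound_mul, CompoundAux.compound_transpose,
    CompoundAux.compound_diagonal] at hC
  have hd : (fun I : {I : Finset (Fin (n + 2)) // I.card = k} =>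
      ∏ i ∈ I.1, (if i = 0 then (-1 : ℝ) else 1))
      = fun I => if (0 : Fin (n + 2)) ∈ I.1 then (-1 : ℝ) else 1 := by
    funext I
    exact Finset.prod_ite_eq' I.1 0 (fun _ => (-1 : ℝ))
  rw [hd] at hC
  have hneg : Matrix.diagonal (fun I : {I : Finset (Fin (n + 2)) // I.card = k} =>
      if (0 : Fin (n + 2)) ∈ I.1 then (1 : ℝ) else -1)
      = -Matrix.diagonal (fun I : {I : Finset (Fin (n + 2)) // I.card = k} =>
        if (0 : Fin (n + 2)) ∈ I.1 then (-1 : ℝ) else 1) := by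
    ext I J
    rcases eq_or_ne I J with rfl | h
    · simp only [Matrix.diagonal_apply_eq, Matrix.neg_apply]
      split <;> ring
    · simp [Matrix.diagonal_apply_ne _ h]
  rw [hneg, Matrix.mul_neg, Matrix.neg_mul, hC]

end
end

section
/- Let m ≥ 1, 1 ≤ k ≤ m, and let p be a nonzero element of the k-th exterior power ⋀^k ℝ^m, with coordinates p_{i₁⋯i_k} (alternating in the indices) with respect to the standard wedge basis. Then p is decomposable, i.e. p = x₁ ∧ ⋯ ∧ x_k for some x₁, …, x_k ∈ ℝ^m, if and only if the Plücker relations hold: for all indices i₁, …, i_{k−1} and j₁, …, j_{k+1} in {0, …, m−1}, Σ_{l=1}^{k+1} (−1)^l p_{i₁⋯i_{k−1} j_l} · p_{j₁⋯ ĵ_l ⋯ j_{k+1}} = 0, where ĵ_l indicates that the index j_l is removed. -/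
noncomputable section

private lemma neg_one_pow_mul_self (n : ℕ) : ((-1:ℝ))^n * (-1)^n = 1 := by
  rw [← mul_pow]; norm_num

/-- Sign lemma: inserting `t` at slot `b` vs appending at the end. -/
private lemma sign_snoc_succAbove {m k' : ℕ} {p : (Fin (k' + 1) → Fin m) → ℝ}
    (halt : ∀ (v : Fin (k' + 1) → Fin m) (σ : Equiv.Perm (Fin (k' + 1))),
      p (v ∘ σ) = ((Equiv.Perm.sign σ : ℤ) : ℝ) * p v)
    (b : Fin (k' + 1)) (w : Fin (k' + 1) → Fin m) (t : Fin m) :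
    p (Fin.snoc (w ∘ b.succAbove) t)
      = (-1 : ℝ) ^ (b : ℕ) * (-1) ^ k' * p (Function.update w b t) := by
  induction b using Fin.reverseInduction generalizing w t with
  | last =>
    have h1 : Fin.snoc (w ∘ (Fin.last k').succAbove) t = Function.update w (Fin.last k') t := by
      funext a
      induction a using Fin.lastCases with
      | last => simp
      | cast a' => simp [Fin.succAbove_last, (Fin.castSucc_lt_last a').ne]
    rw [h1, Fin.val_last, neg_one_pow_mul_self, one_mul]
  | cast i hi =>
    set τ : Equiv.Perm (Fin (k' + 1)) := Equiv.swap i.castSucc i.succ with hτ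
    have hne : i.castSucc ≠ i.succ := (Fin.castSucc_lt_succ (i := i)).ne
    have h1 : w ∘ (i.castSucc).succAbove = (w ∘ τ) ∘ (i.succ).succAbove := by
      funext a
      simp only [Function.comp_apply]
      rcases lt_trichotomy a i with h | h | h
      · have hv : (a : ℕ) < (i : ℕ) := h
        have e1 : i.castSucc.succAbove a = a.castSucc :=
          Fin.succAbove_of_castSucc_lt _ _ (by rwa [Fin.castSucc_lt_castSucc_iff])
        have e2 : i.succ.succAbove a = a.castSucc :=
          Fin.succAbove_of_castSucc_lt _ _
            ((Fin.castSucc_lt_castSucc_iff.mpr h).trans (Fin.castSucc_lt_succ (i := i)))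
        rw [e1, e2, hτ, Equiv.swap_apply_of_ne_of_ne]
        · intro hc
          have := congrArg Fin.val hc
          simp only [Fin.coe_castSucc] at this
          omega
        · intro hc
          have := congrArg Fin.val hc
          simp only [Fin.coe_castSucc, Fin.val_succ] at this
          omega
      · subst h
        have e1 : a.castSucc.succAbove a = a.succ :=
          Fin.succAbove_of_le_castSucc _ _ le_rfl
        have e2 : a.succ.succAbove a = a.castSucc :=
          Fin.succAbove_of_castSucc_lt _ _ (Fin.castSucc_lt_succ (i := a))
        rw [e1, e2, hτ, Equiv.swap_apply_left]
      · have hv : (i : ℕ) < (a : ℕ) := h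
        have e1 : i.castSucc.succAbove a = a.succ :=
          Fin.succAbove_of_le_castSucc _ _
            (by rw [Fin.le_def]; simp only [Fin.coe_castSucc]; omega)
        have e2 : i.succ.succAbove a = a.succ :=
          Fin.succAbove_of_le_castSucc _ _
            (by rw [Fin.le_def]; simp only [Fin.coe_castSucc, Fin.val_succ]; omega)
        rw [e1, e2, hτ, Equiv.swap_apply_of_ne_of_ne]
        · intro hc
          have := congrArg Fin.val hc
          simp only [Fin.coe_castSucc, Fin.val_succ] at this
          omega
        · intro hc
          have := congrArg Fin.val hc
          simp only [Fin.val_succ] at this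
          omega
    have h2 : Function.update (w ∘ τ) i.succ t = (Function.update w i.castSucc t) ∘ τ := by
      funext a
      by_cases ha1 : a = i.castSucc
      · subst ha1
        simp [hτ, Function.update_apply, hne, hne.symm]
      · by_cases ha2 : a = i.succ
        · subst ha2
          simp [hτ, Function.update_apply, hne.symm]
        · simp [Function.update_apply, ha1, ha2, hτ, Equiv.swap_apply_of_ne_of_ne ha1 ha2]
    rw [h1, hi (w ∘ τ) t, h2, halt _ τ, hτ, Equiv.Perm.sign_swap hne]
    simp only [Fin.val_succ, Fin.coe_castSucc, Units.val_neg, Units.val_one, Int.cast_neg,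
      Int.cast_one, pow_succ]
    ring

/-- Forward direction: minors of a matrix satisfy the Plücker relations. -/
private lemma det_plucker_forward (k' m : ℕ) (x : Fin (k' + 1) → (Fin m → ℝ))
    (i : Fin k' → Fin m) (j : Fin (k' + 2) → Fin m) :
    ∑ l : Fin (k' + 2),
      (-1 : ℝ) ^ ((l : ℕ) + 1) *
        Matrix.det (Matrix.of fun a b : Fin (k' + 1) => x a ((Fin.snoc i (j l) : Fin (k' + 1) → Fin m) b)) *
        Matrix.det (Matrix.of fun a b : Fin (k' + 1) => x a (j (l.succAbove b))) = 0 := by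
  set y : Fin (k' + 2) → Fin (k' + 1) → ℝ := fun l a => x a (j l) with hy
  set D : Fin (k' + 2) → ℝ :=
    fun l => Matrix.det (Matrix.of fun a b : Fin (k' + 1) => y (l.succAbove b) a) with hD
  have step1 : ∀ r : Fin (k' + 1),
      ∑ l : Fin (k' + 2), (-1:ℝ)^(l:ℕ) * y l r * D l = 0 := by
    intro r
    set M : Matrix (Fin (k' + 2)) (Fin (k' + 2)) ℝ :=
      Matrix.of fun s l => Fin.cases (y l r) (fun a => y l a) s with hM
    have hdet : M.det = 0 := by
      refine Matrix.det_zero_of_row_eq (M := M) (i := 0) (j := r.succ)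
        (Fin.succ_ne_zero r).symm ?_
      funext l
      simp [hM]
    rw [Matrix.det_succ_row_zero] at hdet
    rw [← hdet]
    refine Finset.sum_congr rfl fun l _ => ?_
    have e1 : M 0 l = y l r := rfl
    have e2 : (M.submatrix Fin.succ l.succAbove) =
        Matrix.of fun a b : Fin (k' + 1) => y (l.succAbove b) a := rfl
    rw [e1, e2]
  set C : Matrix (Fin (k' + 1)) (Fin (k' + 1)) ℝ :=
    Matrix.of fun a b : Fin (k' + 1) => x a ((Fin.snoc i (j 0) : Fin (k' + 1) → Fin m) b) with hC
  have hA : ∀ l : Fin (k' + 2),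
      (Matrix.of fun a b : Fin (k' + 1) => x a ((Fin.snoc i (j l) : Fin (k' + 1) → Fin m) b))
        = C.updateCol (Fin.last k') (y l) := by
    intro l
    ext a b
    rw [Matrix.updateCol_apply]
    induction b using Fin.lastCases with
    | last => simp [hy]
    | cast b' => simp [(Fin.castSucc_lt_last b').ne, hC]
  have key : ∑ l : Fin (k' + 2), ((-1:ℝ)^((l:ℕ)+1) * D l) • y l = 0 := by
    funext r
    rw [Finset.sum_apply]
    simp only [Pi.smul_apply, smul_eq_mul, Pi.zero_apply]
    have : ∀ l : Fin (k' + 2), (-1:ℝ)^((l:ℕ)+1) * D l * y l r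
        = -((-1:ℝ)^(l:ℕ) * y l r * D l) := by
      intro l; rw [pow_succ]; ring
    rw [Finset.sum_congr rfl fun l _ => this l, Finset.sum_neg_distrib, step1, neg_zero]
  have h2 : ∑ l : Fin (k' + 2), ((-1:ℝ)^((l:ℕ)+1) * D l) * (C.cramer (y l) (Fin.last k')) = 0 := by
    have hs : ∑ l : Fin (k' + 2), ((-1:ℝ)^((l:ℕ)+1) * D l) • (C.cramer (y l)) = 0 := by
      simp_rw [← LinearMap.map_smul C.cramer]
      rw [← map_sum, key, map_zero]
    calc ∑ l : Fin (k' + 2), ((-1:ℝ)^((l:ℕ)+1) * D l) * (C.cramer (y l) (Fin.last k'))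
        = (∑ l : Fin (k' + 2), ((-1:ℝ)^((l:ℕ)+1) * D l) • (C.cramer (y l))) (Fin.last k') := by
          rw [Finset.sum_apply]; rfl
      _ = 0 := by rw [hs]; rfl
  rw [← h2]
  refine Finset.sum_congr rfl fun l _ => ?_
  rw [hA l, ← Matrix.cramer_apply]
  have hDl : (Matrix.of fun a b : Fin (k' + 1) => x a (j (l.succAbove b))).det = D l := rfl
  rw [hDl]; ring

/-- Exchange identity derived from the Plücker relations. -/
private lemma plucker_exchange {m k' : ℕ} {p : (Fin (k' + 1) → Fin m) → ℝ}
    (halt : ∀ (v : Fin (k' + 1) → Fin m) (σ : Equiv.Perm (Fin (k' + 1))),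
      p (v ∘ σ) = ((Equiv.Perm.sign σ : ℤ) : ℝ) * p v)
    (hrel : ∀ (i : Fin k' → Fin m) (j : Fin (k' + 2) → Fin m),
      ∑ l : Fin (k' + 2),
        (-1 : ℝ) ^ ((l : ℕ) + 1) * p (Fin.snoc i (j l)) *
          p (fun a => j (l.succAbove a)) = 0)
    (u v : Fin (k' + 1) → Fin m) (b : Fin (k' + 1)) :
    p u * p v = ∑ l : Fin (k' + 1),
      p (Function.update u l (v b)) * p (Function.update v b (u l)) := by
  have h := hrel (v ∘ b.succAbove) (Fin.snoc u (v b))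
  rw [Fin.sum_univ_castSucc] at h
  have e3 : ∀ l' : Fin (k' + 1),
      (fun a => (Fin.snoc u (v b) : Fin (k' + 2) → Fin m) ((Fin.castSucc l').succAbove a))
        = Fin.snoc (u ∘ l'.succAbove) (v b) := by
    intro l'
    funext a
    induction a using Fin.lastCases with
    | last =>
      have : (Fin.castSucc l').succAbove (Fin.last k') = Fin.last (k' + 1) := by
        rw [Fin.succAbove_of_le_castSucc _ _ (by
          rw [Fin.le_def]; simp only [Fin.coe_castSucc]; exact Nat.le_of_lt_succ l'.isLt),
          Fin.succ_last]
      simp [this]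
    | cast a' =>
      rw [Fin.castSucc_succAbove_castSucc]
      simp
  have hlast : (-1:ℝ) ^ ((Fin.last (k' + 1) : ℕ) + 1) *
      p (Fin.snoc (v ∘ b.succAbove) ((Fin.snoc u (v b) : Fin (k' + 2) → Fin m) (Fin.last (k' + 1)))) *
      p (fun a => (Fin.snoc u (v b) : Fin (k' + 2) → Fin m) ((Fin.last (k' + 1)).succAbove a))
      = (-1:ℝ) ^ (b : ℕ) * (p v * p u) := by
    have e1 : (fun a => (Fin.snoc u (v b) : Fin (k' + 2) → Fin m) ((Fin.last (k' + 1)).succAbove a)) = u := by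
      funext a; rw [Fin.succAbove_last]; simp
    rw [e1, Fin.snoc_last, sign_snoc_succAbove halt b v (v b), Function.update_eq_self,
      Fin.val_last]
    calc (-1:ℝ) ^ (k' + 1 + 1) * ((-1) ^ (b:ℕ) * (-1) ^ k' * p v) * p u
        = ((-1:ℝ)^k' * (-1)^k') * ((-1)*(-1)) * ((-1:ℝ)^(b:ℕ) * (p v * p u)) := by
          rw [pow_succ, pow_succ]; ring
      _ = (-1:ℝ) ^ (b : ℕ) * (p v * p u) := by rw [neg_one_pow_mul_self]; ring
  have hcast : ∀ l' : Fin (k' + 1), (-1:ℝ) ^ (((l'.castSucc : Fin (k' + 2)) : ℕ) + 1) *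
      p (Fin.snoc (v ∘ b.succAbove) ((Fin.snoc u (v b) : Fin (k' + 2) → Fin m) l'.castSucc)) *
      p (fun a => (Fin.snoc u (v b) : Fin (k' + 2) → Fin m) ((l'.castSucc).succAbove a))
      = -((-1:ℝ) ^ (b : ℕ) *
          (p (Function.update u l' (v b)) * p (Function.update v b (u l')))) := by
    intro l'
    rw [Fin.snoc_castSucc, e3 l', sign_snoc_succAbove halt b v (u l'),
      sign_snoc_succAbove halt l' u (v b), Fin.coe_castSucc]
    calc (-1:ℝ) ^ ((l' : ℕ) + 1) * ((-1) ^ (b:ℕ) * (-1) ^ k' * p (Function.update v b (u l'))) *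
          ((-1) ^ (l':ℕ) * (-1) ^ k' * p (Function.update u l' (v b)))
        = ((-1:ℝ)^(l':ℕ) * (-1)^(l':ℕ)) * ((-1:ℝ)^k' * (-1)^k') *
            ((-1) * ((-1:ℝ)^(b:ℕ) *
              (p (Function.update u l' (v b)) * p (Function.update v b (u l'))))) := by
          rw [pow_succ]; ring
      _ = _ := by rw [neg_one_pow_mul_self, neg_one_pow_mul_self]; ring
  rw [Finset.sum_congr rfl (fun l' _ => hcast l'), hlast, Finset.sum_neg_distrib] at h
  have hb : ((-1:ℝ) ^ (b:ℕ)) ≠ 0 := pow_ne_zero _ (by norm_num)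
  have h' : (-1:ℝ) ^ (b:ℕ) * (p v * p u -
      ∑ l : Fin (k' + 1), p (Function.update u l (v b)) * p (Function.update v b (u l))) = 0 := by
    rw [mul_sub, Finset.mul_sum]
    linarith [h]
  have h'' := sub_eq_zero.mp ((mul_eq_zero.mp h').resolve_left hb)
  linarith [h'']

/-- Plücker relations characterize decomposability: a nonzero alternating element `p` of
`⋀^k ℝ^m`, given by its coordinates `p_{i₁⋯i_k}` (alternating in the indices), is
decomposable, i.e. `p = x₁ ∧ ⋯ ∧ x_k` (so `p_{i₁⋯i_k} = det[x_{a,i_b}]`), if and only if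
for all indices `i₁, …, i_{k−1}` and `j₁, …, j_{k+1}`,
`Σ_{l=1}^{k+1} (−1)^l p_{i₁⋯i_{k−1}j_l} p_{j₁⋯ĵ_l⋯j_{k+1}} = 0`. -/
theorem plucker_relations_iff_decomposable (m k' : ℕ) (hm : 1 ≤ m) (hk : k' + 1 ≤ m)
    (p : (Fin (k' + 1) → Fin m) → ℝ)
    (halt : ∀ (v : Fin (k' + 1) → Fin m) (σ : Equiv.Perm (Fin (k' + 1))),
      p (v ∘ σ) = ((Equiv.Perm.sign σ : ℤ) : ℝ) * p v)
    (hrep : ∀ v : Fin (k' + 1) → Fin m, ¬Function.Injective v → p v = 0)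
    (hp : p ≠ 0) :
    (∃ x : Fin (k' + 1) → (Fin m → ℝ),
        ∀ v : Fin (k' + 1) → Fin m,
          p v = Matrix.det (Matrix.of fun a b : Fin (k' + 1) => x a (v b))) ↔
      ∀ (i : Fin k' → Fin m) (j : Fin (k' + 2) → Fin m),
        ∑ l : Fin (k' + 2),
          (-1 : ℝ) ^ ((l : ℕ) + 1) * p (Fin.snoc i (j l)) *
            p (fun a => j (l.succAbove a)) = 0 := by
  constructor
  · rintro ⟨x, hx⟩ i j
    simp only [hx]
    exact det_plucker_forward k' m x i j
  · intro hrel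
    obtain ⟨v₀, hv₀⟩ : ∃ v, p v ≠ 0 := Function.ne_iff.mp hp
    have hv₀inj : Function.Injective v₀ := by
      by_contra h; exact hv₀ (hrep _ h)
    set c := p v₀ with hc
    have hc0 : c ≠ 0 := hv₀
    set X : Fin (k' + 1) → Fin m → ℝ := fun l t => p (Function.update v₀ l t) with hX
    set q : (Fin (k' + 1) → Fin m) → ℝ :=
      fun v => Matrix.det (Matrix.of fun a b : Fin (k' + 1) => X a (v b)) with hq
    -- q is alternating
    have qalt : ∀ (v : Fin (k' + 1) → Fin m) (σ : Equiv.Perm (Fin (k' + 1))),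
        q (v ∘ σ) = ((Equiv.Perm.sign σ : ℤ) : ℝ) * q v := by
      intro v σ
      have hmat : (Matrix.of fun a b : Fin (k' + 1) => X a ((v ∘ σ) b))
          = (Matrix.of fun a b : Fin (k' + 1) => X a (v b)).submatrix id σ := rfl
      simp only [hq]
      rw [hmat, Matrix.det_permute']
    -- q kills non-injective tuples
    have qrep : ∀ v : Fin (k' + 1) → Fin m, ¬Function.Injective v → q v = 0 := by
      intro v hv
      obtain ⟨a, a', heq, hne⟩ := Function.not_injective_iff.mp hv
      simp only [hq]
      exact Matrix.det_zero_of_column_eq hne fun r => by simp [heq]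
    -- the base matrix is c • 1
    have hXdiag : (Matrix.of fun a b : Fin (k' + 1) => X a (v₀ b))
        = (c • (1 : Matrix (Fin (k' + 1)) (Fin (k' + 1)) ℝ)) := by
      ext a b
      by_cases h : a = b
      · subst h
        simp [hX, Function.update_eq_self, Matrix.one_apply, ← hc]
      · have hni : ¬ Function.Injective (Function.update v₀ a (v₀ b)) := by
          intro hinj
          have h1 : Function.update v₀ a (v₀ b) a = Function.update v₀ a (v₀ b) b := by
            rw [Function.update_self, Function.update_of_ne (Ne.symm h)]
          exact h (hinj h1)
        simp [hX, hrep _ hni, Matrix.one_apply, h]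
    have hsingle : ∀ (l r : Fin (k' + 1)) (s : ℝ),
        Matrix.det ((c • (1 : Matrix (Fin (k' + 1)) (Fin (k' + 1)) ℝ)).updateCol l
          (Pi.single r s)) = if r = l then s * c ^ k' else 0 := by
      intro l r s
      by_cases h : r = l
      · subst h
        have hdiag : (c • (1 : Matrix (Fin (k' + 1)) (Fin (k' + 1)) ℝ)).updateCol r
            (Pi.single r s) = Matrix.diagonal (Function.update (fun _ => c) r s) := by
          ext a b
          rw [Matrix.updateCol_apply]
          by_cases hb : b = r
          · subst hb
            rw [if_pos rfl]
            by_cases hab : a = b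
            · subst hab
              rw [Pi.single_eq_same, Matrix.diagonal_apply_eq, Function.update_self]
            · rw [Pi.single_eq_of_ne hab, Matrix.diagonal_apply_ne _ hab]
          · rw [if_neg hb]
            by_cases hab : a = b
            · subst hab
              rw [Matrix.diagonal_apply_eq, Function.update_of_ne hb, Matrix.smul_apply,
                Matrix.one_apply_eq, smul_eq_mul, mul_one]
            · rw [Matrix.diagonal_apply_ne _ hab, Matrix.smul_apply, Matrix.one_apply_ne hab,
                smul_eq_mul, mul_zero]
        rw [hdiag, Matrix.det_diagonal, if_pos rfl,
          Finset.prod_update_of_mem (Finset.mem_univ r), Finset.prod_const]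
        have hcard : (Finset.univ \ {r} : Finset (Fin (k' + 1))).card = k' := by
          rw [Finset.card_sdiff_of_subset (by simp), Finset.card_univ, Fintype.card_fin,
            Finset.card_singleton]
          omega
        rw [hcard]
      · rw [if_neg h]
        refine Matrix.det_eq_zero_of_row_eq_zero l fun b => ?_
        rw [Matrix.updateCol_apply]
        by_cases hb : b = l
        · subst hb
          rw [if_pos rfl]
          exact Pi.single_eq_of_ne (Ne.symm h) _
        · rw [if_neg hb, Matrix.smul_apply, Matrix.one_apply_ne (Ne.symm hb), smul_eq_mul,
            mul_zero]
    have hdetupd : ∀ (l : Fin (k' + 1)) (w : Fin (k' + 1) → ℝ),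
        Matrix.det ((c • (1 : Matrix (Fin (k' + 1)) (Fin (k' + 1)) ℝ)).updateCol l w)
          = c ^ k' * w l := by
      intro l w
      rw [← Matrix.cramer_apply]
      conv_lhs => rw [show w = ∑ r : Fin (k' + 1), Pi.single r (w r) from
        (Finset.univ_sum_single w).symm]
      rw [map_sum, Finset.sum_apply]
      have hterm : ∀ r : Fin (k' + 1),
          (c • (1 : Matrix (Fin (k' + 1)) (Fin (k' + 1)) ℝ)).cramer (Pi.single r (w r)) l
            = if r = l then (w r) * c ^ k' else 0 := fun r => by
        rw [Matrix.cramer_apply, hsingle]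
      rw [Finset.sum_congr rfl fun r _ => hterm r]
      simp [Finset.sum_ite_eq', mul_comm]
    have hq_upd : ∀ (l : Fin (k' + 1)) (t : Fin m),
        q (Function.update v₀ l t) = c ^ k' * X l t := by
      intro l t
      have hmat : (Matrix.of fun a b : Fin (k' + 1) => X a (Function.update v₀ l t b))
          = (c • (1 : Matrix (Fin (k' + 1)) (Fin (k' + 1)) ℝ)).updateCol l
              (fun a => X a t) := by
        ext a b
        rw [Matrix.updateCol_apply]
        by_cases hb : b = l
        · subst hb
          rw [if_pos rfl, Matrix.of_apply, Function.update_self]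
        · rw [if_neg hb, Matrix.of_apply, Function.update_of_ne hb]
          exact congrFun (congrFun hXdiag a) b
      simp only [hq]
      rw [congrArg Matrix.det hmat, hdetupd]
    have hq_v₀ : q v₀ = c ^ (k' + 1) := by
      simp only [hq]
      rw [congrArg Matrix.det hXdiag, Matrix.det_smul]
      simp
    have hqrel : ∀ (i : Fin k' → Fin m) (j : Fin (k' + 2) → Fin m),
        ∑ l : Fin (k' + 2),
          (-1 : ℝ) ^ ((l : ℕ) + 1) * q (Fin.snoc i (j l)) *
            q (fun a => j (l.succAbove a)) = 0 := by
      intro i j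
      exact det_plucker_forward k' m X i j
    -- exchange identities
    have hEp : ∀ (v : Fin (k' + 1) → Fin m) (b : Fin (k' + 1)),
        c * p v = ∑ l : Fin (k' + 1), X l (v b) * p (Function.update v b (v₀ l)) :=
      fun v b => plucker_exchange halt hrel v₀ v b
    have hEq : ∀ (v : Fin (k' + 1) → Fin m) (b : Fin (k' + 1)),
        c * q v = ∑ l : Fin (k' + 1), X l (v b) * q (Function.update v b (v₀ l)) := by
      intro v b
      have h0 := plucker_exchange qalt hqrel v₀ v b
      rw [hq_v₀] at h0
      have h1 : ∀ l : Fin (k' + 1), q (Function.update v₀ l (v b)) *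
          q (Function.update v b (v₀ l))
          = c ^ k' * (X l (v b) * q (Function.update v b (v₀ l))) := by
        intro l; rw [hq_upd]; ring
      rw [Finset.sum_congr rfl fun l _ => h1 l, ← Finset.mul_sum] at h0
      have h2 : c ^ k' * (c * q v) = c ^ k' *
          (∑ l : Fin (k' + 1), X l (v b) * q (Function.update v b (v₀ l))) := by
        rw [← h0]; ring
      exact mul_left_cancel₀ (pow_ne_zero _ hc0) h2
    -- the difference
    set d : (Fin (k' + 1) → Fin m) → ℝ := fun v => c ^ k' * p v - q v with hd
    have dalt : ∀ (v : Fin (k' + 1) → Fin m) (σ : Equiv.Perm (Fin (k' + 1))),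
        d (v ∘ σ) = ((Equiv.Perm.sign σ : ℤ) : ℝ) * d v := by
      intro v σ
      simp only [hd]
      rw [halt v σ, qalt v σ]; ring
    have dv₀ : d v₀ = 0 := by
      simp only [hd]
      rw [hq_v₀, ← hc, pow_succ]; ring
    have dEb : ∀ (v : Fin (k' + 1) → Fin m) (b : Fin (k' + 1)),
        c * d v = ∑ l : Fin (k' + 1), X l (v b) * d (Function.update v b (v₀ l)) := by
      intro v b
      simp only [hd]
      calc c * (c ^ k' * p v - q v) = c ^ k' * (c * p v) - c * q v := by ring
        _ = c ^ k' * (∑ l : Fin (k' + 1), X l (v b) * p (Function.update v b (v₀ l)))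
            - ∑ l : Fin (k' + 1), X l (v b) * q (Function.update v b (v₀ l)) := by
            rw [hEp v b, hEq v b]
        _ = ∑ l : Fin (k' + 1), X l (v b) *
              (c ^ k' * p (Function.update v b (v₀ l)) - q (Function.update v b (v₀ l))) := by
            rw [Finset.mul_sum, ← Finset.sum_sub_distrib]
            exact Finset.sum_congr rfl fun l _ => by ring
    -- the induction
    have main : ∀ n : ℕ, ∀ v : Fin (k' + 1) → Fin m, Function.Injective v →
        k' + 1 ≤ (Finset.image v Finset.univ ∩ Finset.image v₀ Finset.univ).card + n →
        d v = 0 := by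
      intro n
      induction n with
      | zero =>
        intro v hv hcard
        have h1 : (Finset.image v Finset.univ).card = k' + 1 := by
          rw [Finset.card_image_of_injective _ hv, Finset.card_univ, Fintype.card_fin]
        have h2 : (Finset.image v₀ Finset.univ).card = k' + 1 := by
          rw [Finset.card_image_of_injective _ hv₀inj, Finset.card_univ, Fintype.card_fin]
        have e1 : Finset.image v Finset.univ ∩ Finset.image v₀ Finset.univ
            = Finset.image v Finset.univ :=
          Finset.eq_of_subset_of_card_le Finset.inter_subset_left (by omega)
        have e2 : Finset.image v Finset.univ ∩ Finset.image v₀ Finset.univ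
            = Finset.image v₀ Finset.univ :=
          Finset.eq_of_subset_of_card_le Finset.inter_subset_right (by omega)
        have himg : Finset.image v Finset.univ = Finset.image v₀ Finset.univ :=
          e1.symm.trans e2
        have hrange : Set.range v = Set.range v₀ := by
          have hco := congrArg (fun s : Finset (Fin m) => (s : Set (Fin m))) himg
          simpa [Finset.coe_image, Set.image_univ] using hco
        set σ : Fin (k' + 1) ≃ Fin (k' + 1) :=
          ((Equiv.ofInjective v hv).trans (Equiv.setCongr hrange)).trans
            (Equiv.ofInjective v₀ hv₀inj).symm with hσ
        have hvσ : v = v₀ ∘ σ := by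
          funext a
          simp only [Function.comp_apply, hσ, Equiv.trans_apply]
          rw [Equiv.apply_ofInjective_symm hv₀inj]
          rfl
        rw [hvσ, dalt v₀ σ, dv₀, mul_zero]
      | succ n ih =>
        intro v hv hcard
        by_cases hcn : k' + 1 ≤
            (Finset.image v Finset.univ ∩ Finset.image v₀ Finset.univ).card + n
        · exact ih v hv hcn
        · have hex : ∃ b, v b ∉ Finset.image v₀ Finset.univ := by
            by_contra hall
            push_neg at hall
            have hsub : Finset.image v Finset.univ ⊆ Finset.image v₀ Finset.univ := by
              intro t ht
              obtain ⟨b, -, rfl⟩ := Finset.mem_image.mp ht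
              exact hall b
            have h1 : (Finset.image v Finset.univ).card = k' + 1 := by
              rw [Finset.card_image_of_injective _ hv, Finset.card_univ, Fintype.card_fin]
            rw [Finset.inter_eq_left.mpr hsub] at hcn
            omega
          obtain ⟨b, hb⟩ := hex
          have hterm : ∀ l : Fin (k' + 1), d (Function.update v b (v₀ l)) = 0 := by
            intro l
            by_cases hinj : Function.Injective (Function.update v b (v₀ l))
            · refine ih _ hinj ?_
              have hsubins : insert (v₀ l)
                  (Finset.image v Finset.univ ∩ Finset.image v₀ Finset.univ) ⊆
                  Finset.image (Function.update v b (v₀ l)) Finset.univ ∩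
                    Finset.image v₀ Finset.univ := by
                intro t ht
                rcases Finset.mem_insert.mp ht with rfl | ht'
                · refine Finset.mem_inter.mpr ⟨?_, ?_⟩
                  · exact Finset.mem_image.mpr ⟨b, Finset.mem_univ _, by simp⟩
                  · exact Finset.mem_image.mpr ⟨l, Finset.mem_univ _, rfl⟩
                · obtain ⟨ht1, ht2⟩ := Finset.mem_inter.mp ht'
                  obtain ⟨a, -, rfl⟩ := Finset.mem_image.mp ht1
                  have hab : a ≠ b := by
                    rintro rfl
                    exact hb ht2
                  refine Finset.mem_inter.mpr
                    ⟨Finset.mem_image.mpr ⟨a, Finset.mem_univ _, by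
                      rw [Function.update_of_ne hab]⟩, ht2⟩
              have hnotmem : v₀ l ∉
                  Finset.image v Finset.univ ∩ Finset.image v₀ Finset.univ := by
                intro hmem
                obtain ⟨a, -, ha⟩ := Finset.mem_image.mp (Finset.mem_inter.mp hmem).1
                have hab : a ≠ b := by
                  rintro rfl
                  rw [ha] at hb
                  exact hb (Finset.mem_image.mpr ⟨l, Finset.mem_univ _, rfl⟩)
                have heq2 : Function.update v b (v₀ l) a = Function.update v b (v₀ l) b := by
                  rw [Function.update_of_ne hab, Function.update_self, ha]
                exact hab (hinj heq2)
              have hins := Finset.card_insert_of_notMem hnotmem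
              have hle := Finset.card_le_card hsubins
              omega
            · simp only [hd]
              rw [hrep _ hinj, qrep _ hinj]; ring
          have hzero : c * d v = 0 := by
            rw [dEb v b]
            exact Finset.sum_eq_zero fun l _ => by rw [hterm l, mul_zero]
          exact (mul_eq_zero.mp hzero).resolve_left hc0
    have hpq : ∀ v : Fin (k' + 1) → Fin m, c ^ k' * p v = q v := by
      intro v
      by_cases hv : Function.Injective v
      · have h0 := main (k' + 1) v hv (by omega)
        simp only [hd] at h0
        linarith
      · rw [hrep _ hv, qrep _ hv, mul_zero]
    refine ⟨Function.update X 0 ((c ^ k')⁻¹ • X 0), fun v => ?_⟩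
    have hmat : (Matrix.of fun a b : Fin (k' + 1) =>
          Function.update X 0 ((c ^ k')⁻¹ • X 0) a (v b))
        = (Matrix.of fun a b : Fin (k' + 1) => X a (v b)).updateRow 0
            ((c ^ k')⁻¹ • fun b => X 0 (v b)) := by
      ext a b
      rw [Matrix.updateRow_apply]
      by_cases ha : a = 0
      · subst ha; simp
      · simp [Function.update_of_ne ha, ha]
    rw [hmat, Matrix.det_updateRow_smul]
    have hself : (Matrix.of fun a b : Fin (k' + 1) => X a (v b)).updateRow 0
          (fun b => X 0 (v b))
        = Matrix.of fun a b : Fin (k' + 1) => X a (v b) := Matrix.updateRow_eq_self _ _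
    rw [hself]
    have hqv : Matrix.det (Matrix.of fun a b : Fin (k' + 1) => X a (v b)) = c ^ k' * p v :=
      (hpq v).symm
    rw [hqv, inv_mul_cancel_left₀ (pow_ne_zero _ hc0)]
end
end

section
/- Let γ, η: ℝ → ℝ⁵ be C¹ curves lying on the light cone of the Minkowski form B on ℝ⁵, i.e. B(γ(x), γ(x)) = 0 and B(η(y), η(y)) = 0 for all x, y. On the open set where B(γ(x), η(y)) ≠ 0, define s(x,y) = γ(x) ∧ η(y) / √(B₂(γ(x)∧η(y), γ(x)∧η(y))) ∈ ⋀²ℝ⁵ (note B₂(γ∧η, γ∧η) = B(γ,η)² > 0 there). Then the partial derivatives of s are lightlike for the induced form: B₂(∂s/∂x, ∂s/∂x) = 0 and B₂(∂s/∂y, ∂s/∂y) = 0 at every such point. (In the notation of the paper: ⟨s_x, s_x⟩ = ⟨s_y, s_y⟩ = 0.) -/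
noncomputable section

/-- The Minkowski bilinear form `B(x,y) = −x₀y₀ + Σ_{i=1}^{4} x_i y_i` on `ℝ⁵`. -/
def B5 (x y : Fin 5 → ℝ) : ℝ := (∑ i, x i * y i) - 2 * x 0 * y 0

/-- The Lorentz signature vector `η = (−1,1,1,1,1)`. -/
def lsgn : Fin 5 → ℝ := fun i => if i = 0 then -1 else 1

/-- The wedge `a ∧ b ∈ ⋀²ℝ⁵`, realized as the antisymmetric array
`(a ∧ b)_{ij} = a_i b_j − a_j b_i`. -/
def wedge2 (a b : Fin 5 → ℝ) : Fin 5 → Fin 5 → ℝ := fun i j => a i * b j - a j * b i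

/-- The bilinear form induced by `B` on `⋀²ℝ⁵`: on decomposables it satisfies
`B₂(a∧b, c∧d) = −(B(a,c)B(b,d) − B(a,d)B(b,c))`. -/
def B2 (M N : Fin 5 → Fin 5 → ℝ) : ℝ :=
  -(1 / 2) * ∑ i, ∑ j, lsgn i * lsgn j * M i j * N i j

lemma B5_symm (a b : Fin 5 → ℝ) : B5 a b = B5 b a := by
  simp [B5, Fin.sum_univ_five]; ring

lemma B2_expand (a b c d : Fin 5 → ℝ) :
    B2 (wedge2 a b) (wedge2 c d) = -(B5 a c * B5 b d - B5 a d * B5 b c) := by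
  simp [B2, wedge2, B5, lsgn, Fin.sum_univ_five]; ring

lemma B2_quad (r t : ℝ) (M N : Fin 5 → Fin 5 → ℝ) :
    B2 (r • M + t • N) (r • M + t • N)
      = r ^ 2 * B2 M M + 2 * (r * t) * B2 M N + t ^ 2 * B2 N N := by
  simp [B2, Fin.sum_univ_five, smul_eq_mul]; ring

lemma key (γ : ℝ → (Fin 5 → ℝ)) (b : Fin 5 → ℝ) (hγ : ContDiff ℝ 1 γ)
    (hγl : ∀ u : ℝ, B5 (γ u) (γ u) = 0) (hb : B5 b b = 0)
    (x : ℝ) (hx : B5 (γ x) b ≠ 0) :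
    B2 (deriv (fun u => (Real.sqrt (B2 (wedge2 (γ u) b) (wedge2 (γ u) b)))⁻¹ •
          wedge2 (γ u) b) x)
       (deriv (fun u => (Real.sqrt (B2 (wedge2 (γ u) b) (wedge2 (γ u) b)))⁻¹ •
          wedge2 (γ u) b) x) = 0 := by
  set f : ℝ → ℝ := fun u => B5 (γ u) b with hfdef
  have hww : ∀ u, B2 (wedge2 (γ u) b) (wedge2 (γ u) b) = f u ^ 2 := by
    intro u
    rw [B2_expand, hγl u, hb, B5_symm b (γ u)]
    ring
  have hfun : (fun u => (Real.sqrt (B2 (wedge2 (γ u) b) (wedge2 (γ u) b)))⁻¹ •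
        wedge2 (γ u) b) = fun u => |f u|⁻¹ • wedge2 (γ u) b := by
    funext u
    rw [hww u, Real.sqrt_sq_eq_abs]
  rw [hfun]
  -- derivatives of components of γ
  have hγd : ∀ u, HasDerivAt γ (deriv γ u) u := fun u =>
    ((hγ.differentiable one_ne_zero) u).hasDerivAt
  have hc : ∀ u, ∀ i, HasDerivAt (fun v => γ v i) (deriv γ u i) u := fun u =>
    hasDerivAt_pi.mp (hγd u)
  have hf : ∀ u, HasDerivAt f (B5 (deriv γ u) b) u := by
    intro u
    have h1 : HasDerivAt (fun v => (∑ i, γ v i * b i) - 2 * γ v 0 * b 0)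
        ((∑ i, deriv γ u i * b i) - 2 * deriv γ u 0 * b 0) u := by
      have hsum : HasDerivAt (fun v => ∑ i, γ v i * b i)
          (∑ i, deriv γ u i * b i) u :=
        HasDerivAt.fun_sum (fun i _ => (hc u i).mul_const (b i))
      have h2 : HasDerivAt (fun v => 2 * γ v 0 * b 0)
          (2 * deriv γ u 0 * b 0) u := by
        simpa [mul_assoc] using (((hc u 0).const_mul 2).mul_const (b 0))
      exact hsum.sub h2
    simpa [hfdef, B5] using h1
  have hw : HasDerivAt (fun u => wedge2 (γ u) b) (wedge2 (deriv γ x) b) x := by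
    apply hasDerivAt_pi.mpr
    intro i
    apply hasDerivAt_pi.mpr
    intro j
    exact ((hc x i).mul_const (b j)).sub ((hc x j).mul_const (b i))
  set F : ℝ := f x with hF
  set F' : ℝ := B5 (deriv γ x) b with hF'
  -- key B2 values
  have e1 : B2 (wedge2 (γ x) b) (wedge2 (γ x) b) = F ^ 2 := hww x
  have e2 : B2 (wedge2 (γ x) b) (wedge2 (deriv γ x) b) = F * F' := by
    rw [B2_expand, hb, B5_symm b (deriv γ x)]
    simp only [hF, hF', hfdef]
    ring
  have e3 : B2 (wedge2 (deriv γ x) b) (wedge2 (deriv γ x) b) = F' ^ 2 := by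
    rw [B2_expand, hb, B5_symm b (deriv γ x)]
    simp only [hF']
    ring
  have hcomp : ∀ M N : Fin 5 → Fin 5 → ℝ, B2 M M = F ^ 2 → B2 M N = F * F' →
      B2 N N = F' ^ 2 →
      B2 ((-F' / F ^ 2) • M + F⁻¹ • N) ((-F' / F ^ 2) • M + F⁻¹ • N) = 0 := by
    intro M N h1 h2 h3
    rw [B2_quad, h1, h2, h3]
    field_simp
    ring
  rcases hx.lt_or_gt with hneg | hpos
  · -- f x < 0 : eventually |f| = -f
    have hev : ∀ᶠ u in nhds x, f u < 0 :=
      (hf x).continuousAt (Iio_mem_nhds hneg)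
    have heq : (fun u => |f u|⁻¹ • wedge2 (γ u) b)
        =ᶠ[nhds x] (fun u => -(((f u)⁻¹) • wedge2 (γ u) b)) := by
      filter_upwards [hev] with u hu
      rw [abs_of_neg hu, inv_neg, neg_smul]
    rw [heq.deriv_eq]
    have hd : HasDerivAt (fun u => ((f u)⁻¹) • wedge2 (γ u) b)
        (F⁻¹ • wedge2 (deriv γ x) b + (-F' / F ^ 2) • wedge2 (γ x) b) x :=
      ((hf x).inv hx).smul hw
    rw [hd.fun_neg.deriv]
    have := hcomp (wedge2 (γ x) b) (wedge2 (deriv γ x) b) e1 e2 e3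
    have hrw : -(F⁻¹ • wedge2 (deriv γ x) b + (-F' / F ^ 2) • wedge2 (γ x) b)
        = (-(-F' / F ^ 2)) • wedge2 (γ x) b + (-F⁻¹) • wedge2 (deriv γ x) b := by
      module
    rw [hrw, B2_quad]
    rw [e1, e2, e3]
    field_simp
    ring
  · have hev : ∀ᶠ u in nhds x, 0 < f u :=
      (hf x).continuousAt (Ioi_mem_nhds hpos)
    have heq : (fun u => |f u|⁻¹ • wedge2 (γ u) b)
        =ᶠ[nhds x] (fun u => ((f u)⁻¹) • wedge2 (γ u) b) := by
      filter_upwards [hev] with u hu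
      rw [abs_of_pos hu]
    rw [heq.deriv_eq]
    have hd : HasDerivAt (fun u => ((f u)⁻¹) • wedge2 (γ u) b)
        (F⁻¹ • wedge2 (deriv γ x) b + (-F' / F ^ 2) • wedge2 (γ x) b) x :=
      ((hf x).inv hx).smul hw
    rw [hd.deriv]
    have hrw : F⁻¹ • wedge2 (deriv γ x) b + (-F' / F ^ 2) • wedge2 (γ x) b
        = (-F' / F ^ 2) • wedge2 (γ x) b + F⁻¹ • wedge2 (deriv γ x) b := by
      module
    rw [hrw]
    exact hcomp _ _ e1 e2 e3


/-- For C¹ curves `γ, η` on the light cone, the partial derivatives of the normalized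
wedge `s(x,y) = γ(x) ∧ η(y) / √(B₂(γ(x)∧η(y), γ(x)∧η(y)))` are lightlike for the
induced form: `⟨s_x, s_x⟩ = ⟨s_y, s_y⟩ = 0` wherever `B(γ(x), η(y)) ≠ 0`. -/
theorem normalized_wedge_partials_lightlike (γ η : ℝ → (Fin 5 → ℝ))
    (hγ : ContDiff ℝ 1 γ) (hη : ContDiff ℝ 1 η)
    (hγl : ∀ x : ℝ, B5 (γ x) (γ x) = 0) (hηl : ∀ y : ℝ, B5 (η y) (η y) = 0)
    (x y : ℝ) (hxy : B5 (γ x) (η y) ≠ 0) :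
    B2 (deriv (fun u => (Real.sqrt (B2 (wedge2 (γ u) (η y)) (wedge2 (γ u) (η y))))⁻¹ •
          wedge2 (γ u) (η y)) x)
       (deriv (fun u => (Real.sqrt (B2 (wedge2 (γ u) (η y)) (wedge2 (γ u) (η y))))⁻¹ •
          wedge2 (γ u) (η y)) x) = 0 ∧
    B2 (deriv (fun v => (Real.sqrt (B2 (wedge2 (γ x) (η v)) (wedge2 (γ x) (η v))))⁻¹ •
          wedge2 (γ x) (η v)) y)
       (deriv (fun v => (Real.sqrt (B2 (wedge2 (γ x) (η v)) (wedge2 (γ x) (η v))))⁻¹ •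
          wedge2 (γ x) (η v)) y) = 0 := by
  constructor
  · exact key γ (η y) hγ hγl (hηl y) x hxy
  · -- rewrite wedge2 (γ x) (η v) = -(wedge2 (η v) (γ x)) and B2 symmetric in swap
    have hwswap : ∀ a c : Fin 5 → ℝ, wedge2 a c = -(wedge2 c a) := by
      intro a c; funext i j; simp [wedge2]; ring
    have hBswap : ∀ a c : Fin 5 → ℝ,
        B2 (wedge2 a c) (wedge2 a c) = B2 (wedge2 c a) (wedge2 c a) := by
      intro a c
      rw [B2_expand, B2_expand]
      ring
    have hfun : (fun v => (Real.sqrt (B2 (wedge2 (γ x) (η v)) (wedge2 (γ x) (η v))))⁻¹ •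
          wedge2 (γ x) (η v))
        = fun v => -((Real.sqrt (B2 (wedge2 (η v) (γ x)) (wedge2 (η v) (γ x))))⁻¹ •
          wedge2 (η v) (γ x)) := by
      funext v
      rw [hBswap (γ x) (η v), hwswap (γ x) (η v), smul_neg]
    rw [hfun, deriv.fun_neg]
    have hB2neg : ∀ M : Fin 5 → Fin 5 → ℝ, B2 (-M) (-M) = B2 M M := by
      intro M
      simp only [B2, Pi.neg_apply, Fin.sum_univ_five]
      ring
    rw [hB2neg]
    have hyx : B5 (η y) (γ x) ≠ 0 := by rwa [B5_symm (η y) (γ x)]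
    exact key η (γ x) hη hηl (hγl x) y hyx
end
end
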